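/- arXiv:1401.8239 — 7 statements merged into one kernel-verified Lean document; each statement's English description precedes it below -/
import Mathlib

section
/- Let p, q be positive integers, let C(1), …, C(q) be selfadjoint (Hermitian) p×p complex matrices that are linearly independent over ℝ, and let b(1), …, b(q) be real numbers. If there exists a positive definite matrix X ∈ M_p(ℂ) such that tr(C(ι)·X) = b(ι) for all ι = 1, …, q, then the function V : ℝ^q → ℝ defined by V(x) = tr(exp(Σ_{ι=1}^q x(ι)·C(ι))) − Σ_{ι=1}^q x(ι)·b(ι) is coercive, i.e. V(x) → +∞ as ‖x‖ → ∞. -/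
open scoped Matrix ComplexOrder

section Aux
open Matrix
variable {p : ℕ}

private lemma re_star_mul' (z : ℂ) : (star z * z).re = Complex.normSq z := by
  rw [show star z = (starRingEnd ℂ) z from rfl, ← Complex.normSq_eq_conj_mul_self,
    Complex.ofReal_re]

private lemma trace_exp_herm (A : Matrix (Fin p) (Fin p) ℂ) (hA : A.IsHermitian) :
    (Matrix.trace (NormedSpace.exp A)).re = ∑ i, Real.exp (hA.eigenvalues i) := by
  set U : Matrix (Fin p) (Fin p) ℂ := (hA.eigenvectorUnitary : Matrix (Fin p) (Fin p) ℂ) with hUdef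
  have hUl : star U * U = 1 := Unitary.coe_star_mul_self _
  have hUinv : U⁻¹ = star U := Matrix.inv_eq_left_inv hUl
  have hU : IsUnit U := ⟨Units.mk U (star U) (Unitary.coe_mul_star_self _) hUl, rfl⟩
  have hspec : A = U * diagonal (RCLike.ofReal ∘ hA.eigenvalues) * U⁻¹ := by
    rw [hUinv]; exact hA.spectral_theorem
  have hexp := congrArg (NormedSpace.exp) hspec
  rw [Matrix.exp_conj U _ hU] at hexp
  rw [hexp, Matrix.trace_mul_comm, ← Matrix.mul_assoc, hUinv, hUl,
    Matrix.one_mul, Matrix.exp_diagonal, Matrix.trace_diagonal]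
  rw [Complex.re_sum]
  congr 1; ext i
  have : NormedSpace.exp (RCLike.ofReal ∘ hA.eigenvalues) i
      = Complex.exp (hA.eigenvalues i) := by
    rw [Pi.exp_def]; simp [Complex.exp_eq_exp_ℂ]
  rw [this]
  simp [← Complex.ofReal_exp]

private lemma trace_sq_herm (A : Matrix (Fin p) (Fin p) ℂ) (hA : A.IsHermitian) :
    (Matrix.trace (A * A)).re = ∑ i, (hA.eigenvalues i)^2 := by
  set U : Matrix (Fin p) (Fin p) ℂ := (hA.eigenvectorUnitary : Matrix (Fin p) (Fin p) ℂ) with hUdef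
  set D : Matrix (Fin p) (Fin p) ℂ := diagonal (RCLike.ofReal ∘ hA.eigenvalues) with hDdef
  have hUl : star U * U = 1 := Unitary.coe_star_mul_self _
  have hspec : A = U * D * star U := hA.spectral_theorem
  have h2 : A * A = U * (D * D) * star U := by
    conv_lhs => rw [hspec]
    simp only [Matrix.mul_assoc]
    congr 1
    rw [show star U * (U * (D * star U)) = (star U * U) * (D * star U) by
      simp only [Matrix.mul_assoc], hUl, Matrix.one_mul]
  rw [h2, Matrix.trace_mul_comm, ← Matrix.mul_assoc, hUl, Matrix.one_mul, hDdef,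
    Matrix.diagonal_mul_diagonal, Matrix.trace_diagonal, Complex.re_sum]
  congr 1; ext i
  simp [sq]

private lemma trace_mul_herm (A : Matrix (Fin p) (Fin p) ℂ) (hA : A.IsHermitian)
    (X : Matrix (Fin p) (Fin p) ℂ) :
    (Matrix.trace (A * X)).re
      = ∑ i, hA.eigenvalues i *
        ((star (hA.eigenvectorUnitary : Matrix (Fin p) (Fin p) ℂ) * X * (hA.eigenvectorUnitary : Matrix (Fin p) (Fin p) ℂ)) i i).re := by
  set U : Matrix (Fin p) (Fin p) ℂ := (hA.eigenvectorUnitary : Matrix (Fin p) (Fin p) ℂ) with hUdef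
  set D : Matrix (Fin p) (Fin p) ℂ := diagonal (RCLike.ofReal ∘ hA.eigenvalues) with hDdef
  have hspec : A = U * D * star U := hA.spectral_theorem
  have h2 : Matrix.trace (A * X) = Matrix.trace (D * (star U * X * U)) := by
    conv_lhs => rw [hspec]
    rw [show U * D * star U * X = U * (D * (star U * X)) by simp only [Matrix.mul_assoc],
      Matrix.trace_mul_comm]
    simp only [Matrix.mul_assoc]
  rw [h2, Matrix.trace, Complex.re_sum]
  congr 1; ext i
  rw [Matrix.diag, hDdef, Matrix.diagonal_mul]
  exact Complex.re_ofReal_mul _ _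

private lemma herm_eq_zero_of_eigs (A : Matrix (Fin p) (Fin p) ℂ) (hA : A.IsHermitian)
    (h : ∀ i, hA.eigenvalues i = 0) : A = 0 := by
  have hspec := hA.spectral_theorem
  have : diagonal (RCLike.ofReal ∘ hA.eigenvalues) = (0 : Matrix (Fin p) (Fin p) ℂ) := by
    rw [show RCLike.ofReal ∘ hA.eigenvalues = fun _ => (0:ℂ) by ext i; simp [h i]]
    simp
  rw [this, map_zero] at hspec
  exact hspec

private lemma posdef_sphere_min (hp : 0 < p) (X : Matrix (Fin p) (Fin p) ℂ) (hX : X.PosDef) :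
    ∃ m : ℝ, 0 < m ∧ ∀ v : Fin p → ℂ, (∑ j, Complex.normSq (v j)) = 1 →
      m ≤ (star v ⬝ᵥ X *ᵥ v).re := by
  set K : Set (Fin p → ℂ) := {v | (∑ j, Complex.normSq (v j)) = 1} with hK
  have hg : Continuous fun v : Fin p → ℂ => ∑ j, Complex.normSq (v j) :=
    continuous_finset_sum _ fun j _ => Complex.continuous_normSq.comp (continuous_apply j)
  have hf : Continuous fun v : Fin p → ℂ => (star v ⬝ᵥ X *ᵥ v).re := by
    simp only [dotProduct, mulVec, Pi.star_apply]
    fun_prop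
  have hclosed : IsClosed K := isClosed_eq hg continuous_const
  have hsub : K ⊆ Metric.closedBall (0 : Fin p → ℂ) 1 := by
    intro v hv
    rw [Metric.mem_closedBall, dist_zero_right]
    refine (pi_norm_le_iff_of_nonneg zero_le_one).2 fun j => ?_
    have h1 : Complex.normSq (v j) ≤ 1 := by
      rw [← hv]
      exact Finset.single_le_sum (fun k _ => Complex.normSq_nonneg _) (Finset.mem_univ j)
    have h2 : ‖v j‖ ^ 2 = Complex.normSq (v j) := by
      rw [Complex.sq_norm]
    nlinarith [norm_nonneg (v j)]
  have hcpt : IsCompact K :=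
    (isCompact_closedBall (0 : Fin p → ℂ) 1).of_isClosed_subset hclosed hsub
  have hne : K.Nonempty := by
    refine ⟨Pi.single ⟨0, hp⟩ 1, ?_⟩
    simp [hK, Pi.single_apply, apply_ite Complex.normSq, Finset.sum_ite_eq']
  obtain ⟨v0, hv0K, hmin⟩ := hcpt.exists_isMinOn hne hf.continuousOn
  refine ⟨(star v0 ⬝ᵥ X *ᵥ v0).re, ?_, fun v hv => hmin hv⟩
  have hv0ne : v0 ≠ 0 := by
    intro h0
    rw [h0] at hv0K
    simp [hK] at hv0K
  have := hX.dotProduct_mulVec_pos hv0ne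
  rw [Complex.lt_def] at this
  simpa using this.1

private lemma unitary_col_diag (U : Matrix (Fin p) (Fin p) ℂ)
    (X : Matrix (Fin p) (Fin p) ℂ) (i : Fin p) :
    ((star U * X * U) i i) = star (fun j => U j i) ⬝ᵥ (X *ᵥ fun j => U j i) := by
  simp only [Matrix.mul_apply, dotProduct, mulVec, Pi.star_apply, Matrix.star_apply,
    Finset.sum_mul, Finset.mul_sum]
  rw [Finset.sum_comm]
  congr 1; ext j
  congr 1; ext k
  ring

private lemma unitary_col_normSq (U : Matrix (Fin p) (Fin p) ℂ) (hUl : star U * U = 1)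
    (i : Fin p) : (∑ j, Complex.normSq (U j i)) = 1 := by
  have h := congrFun (congrFun hUl i) i
  simp only [Matrix.mul_apply, Matrix.star_apply, Matrix.one_apply_eq] at h
  have h2 := congrArg Complex.re h
  rw [Complex.re_sum, Complex.one_re] at h2
  rw [← h2]
  congr 1; ext j
  rw [re_star_mul']

private lemma exp_quarter (t : ℝ) (ht : 0 ≤ t) : t^2/4 ≤ Real.exp t := by
  have h : Real.exp (t/2) * Real.exp (t/2) = Real.exp t := by
    rw [← Real.exp_add]; ring_nf
  nlinarith [Real.add_one_le_exp (t/2), Real.exp_pos (t/2)]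

private lemma floor_bound {m M a u : ℝ} (hm0 : 0 < m) (hM0 : 0 < M)
    (hu1 : m ≤ u) (hu2 : u ≤ M) : -(M^2) ≤ Real.exp a - a * u := by
  rcases le_or_gt 0 a with hpos | hneg
  · have h1 : a * u ≤ a * M := mul_le_mul_of_nonneg_left hu2 hpos
    have h2 := exp_quarter a hpos
    nlinarith [sq_nonneg (a - 2*M)]
  · have h1 : (0:ℝ) ≤ (-a) * (u - m) := mul_nonneg (by linarith) (by linarith)
    nlinarith [Real.exp_pos a, sq_nonneg M]

private lemma spike_bound {m M S a u : ℝ} (hm0 : 0 < m) (hM0 : 0 < M)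
    (hu1 : m ≤ u) (hu2 : u ≤ M)
    (hs0 : max (S/m) (2*M + 2*Real.sqrt (max (S + M^2) 0)) ≤ |a|) :
    S ≤ Real.exp a - a * u := by
  rcases le_or_gt 0 a with hpos | hneg
  · have habs' : max (S/m) (2*M + 2*Real.sqrt (max (S + M^2) 0)) ≤ a := by
      rwa [abs_of_nonneg hpos] at hs0
    have h2 := exp_quarter a hpos
    have h3 : 2*M + 2*Real.sqrt (max (S + M^2) 0) ≤ a :=
      le_trans (le_max_right _ _) habs'
    have h4 : Real.sqrt (max (S + M^2) 0)^2 = max (S+M^2) 0 :=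
      Real.sq_sqrt (le_max_right _ _)
    have h5 : S + M^2 ≤ max (S+M^2) 0 := le_max_left _ _
    have h6 : a * u ≤ a * M := mul_le_mul_of_nonneg_left hu2 hpos
    nlinarith [Real.sqrt_nonneg (max (S+M^2) 0),
      sq_nonneg (a - 2*M - 2*Real.sqrt (max (S+M^2) 0))]
  · have habs' : max (S/m) (2*M + 2*Real.sqrt (max (S + M^2) 0)) ≤ -a := by
      rwa [abs_of_neg hneg] at hs0
    have h3 : S/m ≤ -a := le_trans (le_max_left _ _) habs'
    have h7 : S ≤ m * (-a) := by
      have hsm : m * (S/m) = S := by field_simp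
      nlinarith
    nlinarith [Real.exp_pos a,
      mul_le_mul_of_nonneg_left hu1 (le_of_lt (neg_pos.2 hneg))]

end Aux

/-- The function `V(x) = tr(exp(∑ ι, x ι • C ι)) − ∑ ι, x ι * b ι`. -/
noncomputable def convPotential {p q : ℕ} (C : Fin q → Matrix (Fin p) (Fin p) ℂ)
    (b : Fin q → ℝ) (x : Fin q → ℝ) : ℝ :=
  (Matrix.trace (NormedSpace.exp (∑ ι, x ι • C ι))).re - ∑ ι, x ι * b ι

theorem coercive_of_posdef_solution {p q : ℕ} (hp : 0 < p) (hq : 0 < q)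
    (C : Fin q → Matrix (Fin p) (Fin p) ℂ) (hC : ∀ ι, (C ι).IsHermitian)
    (hind : LinearIndependent ℝ C) (b : Fin q → ℝ)
    (X : Matrix (Fin p) (Fin p) ℂ) (hX : X.PosDef)
    (hsol : ∀ ι, Matrix.trace (C ι * X) = (b ι : ℂ)) :
    ∀ r : ℝ, ∃ R : ℝ, ∀ x : Fin q → ℝ, R ≤ ‖x‖ → r ≤ convPotential C b x := by
  classical
  open Matrix in
  -- the Hermitian matrix associated to `x`
  set A : (Fin q → ℝ) → Matrix (Fin p) (Fin p) ℂ := fun x => ∑ ι, x ι • C ι with hAdef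
  have hA : ∀ x, (A x).IsHermitian := by
    intro x
    unfold A
    unfold Matrix.IsHermitian
    rw [Matrix.conjTranspose_sum]
    congr 1; ext ι
    rw [Matrix.conjTranspose_smul, star_trivial, (hC ι).eq]
  -- eigenvalues
  set ev : (Fin q → ℝ) → Fin p → ℝ := fun x => (hA x).eigenvalues with hevdef
  -- linear part equals weighted trace
  have hsum : ∀ x : Fin q → ℝ, ∑ ι, x ι * b ι = (Matrix.trace (A x * X)).re := by
    intro x
    unfold A
    rw [Finset.sum_mul]
    simp_rw [Matrix.smul_mul]
    rw [Matrix.trace_sum]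
    simp_rw [Matrix.trace_smul, hsol]
    rw [Complex.re_sum]
    congr 1; ext ι
    rw [Complex.smul_re, Complex.ofReal_re, smul_eq_mul]
  -- constants from positive definiteness of X
  obtain ⟨m, hm0, hm⟩ := posdef_sphere_min hp X hX
  set M : ℝ := (Matrix.trace X).re with hMdef
  set U : (Fin q → ℝ) → Matrix (Fin p) (Fin p) ℂ :=
    fun x => ((hA x).eigenvectorUnitary : Matrix (Fin p) (Fin p) ℂ) with hUdef
  set yre : (Fin q → ℝ) → Fin p → ℝ := fun x i => ((star (U x) * X * U x) i i).re with hyredef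
  have hUl : ∀ x, star (U x) * (U x) = 1 := fun x => Unitary.coe_star_mul_self _
  have hUr : ∀ x, (U x) * star (U x) = 1 := fun x => Unitary.coe_mul_star_self _
  have hlow : ∀ x i, m ≤ yre x i := by
    intro x i
    show m ≤ ((star (U x) * X * U x) i i).re
    rw [unitary_col_diag]
    exact hm _ (unitary_col_normSq _ (hUl x) i)
  have htr : ∀ x, ∑ i, yre x i = M := by
    intro x
    have h1 : Matrix.trace (star (U x) * X * (U x)) = Matrix.trace X := by
      rw [Matrix.trace_mul_comm, ← Matrix.mul_assoc, hUr x, Matrix.one_mul]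
    have h2 := congrArg Complex.re h1
    rw [Matrix.trace, Complex.re_sum] at h2
    exact h2
  have hupp : ∀ x i, yre x i ≤ M := by
    intro x i
    rw [← htr x]
    exact Finset.single_le_sum (fun j _ => le_trans (le_of_lt hm0) (hlow x j))
      (Finset.mem_univ i)
  have hmM : m ≤ M := le_trans (hlow 0 ⟨0, hp⟩) (hupp 0 ⟨0, hp⟩)
  have hM0 : 0 < M := lt_of_lt_of_le hm0 hmM
  -- quadratic lower bound from linear independence
  have hpsi : ∀ x, (Matrix.trace (A x * A x)).re = ∑ i, (ev x i)^2 := fun x =>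
    trace_sq_herm _ (hA x)
  have hAcont : Continuous A :=
    continuous_finset_sum _ fun ι _ => (continuous_apply ι).smul continuous_const
  have hfcont : Continuous fun x => (Matrix.trace (A x * A x)).re :=
    Complex.continuous_re.comp ((hAcont.matrix_mul hAcont).matrix_trace)
  haveI : Nonempty (Fin q) := ⟨⟨0, hq⟩⟩
  have hsne : (Metric.sphere (0 : Fin q → ℝ) 1).Nonempty :=
    NormedSpace.sphere_nonempty.2 zero_le_one
  obtain ⟨x0, hx0S, hminc⟩ :=
    (isCompact_sphere (0 : Fin q → ℝ) 1).exists_isMinOn hsne hfcont.continuousOn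
  set c : ℝ := (Matrix.trace (A x0 * A x0)).re with hcdef
  have hx0norm : ‖x0‖ = 1 := by rwa [mem_sphere_zero_iff_norm] at hx0S
  have hcnn : 0 ≤ c := by rw [hcdef, hpsi x0]; positivity
  have hcne : c ≠ 0 := by
    intro h0
    have h1 : ∑ i, (ev x0 i)^2 = 0 := by rw [← hpsi x0, ← hcdef, h0]
    have hev0 : ∀ i, ev x0 i = 0 := by
      intro i
      have := (Finset.sum_eq_zero_iff_of_nonneg
        (fun i _ => sq_nonneg (ev x0 i))).1 h1 i (Finset.mem_univ i)
      exact pow_eq_zero_iff two_ne_zero |>.1 this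
    have hA0 : A x0 = 0 := herm_eq_zero_of_eigs _ (hA x0) hev0
    have hx00 : x0 = 0 := by
      have := Fintype.linearIndependent_iff.1 hind x0 hA0
      funext ι; exact this ι
    rw [hx00] at hx0norm
    simp at hx0norm
  have hc0 : 0 < c := lt_of_le_of_ne hcnn (Ne.symm hcne)
  have hAsmul : ∀ (t : ℝ) (y : Fin q → ℝ), A (t • y) = t • A y := by
    intro t y
    show ∑ ι, (t • y) ι • C ι = t • ∑ ι, y ι • C ι
    rw [Finset.smul_sum]
    refine Finset.sum_congr rfl fun ι _ => ?_
    rw [Pi.smul_apply, smul_eq_mul, mul_smul]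
  have hcineq : ∀ x : Fin q → ℝ, c * ‖x‖^2 ≤ ∑ i, (ev x i)^2 := by
    intro x
    rcases eq_or_ne x 0 with rfl | hx
    · rw [← hpsi 0]
      simp only [norm_zero]
      have : (0:ℝ) ≤ (Matrix.trace (A 0 * A 0)).re := by rw [hpsi 0]; positivity
      nlinarith
    · set s := ‖x‖ with hs
      have hs0 : 0 < s := norm_pos_iff.2 hx
      set y := s⁻¹ • x with hy
      have hyn : ‖y‖ = 1 := by
        rw [hy, norm_smul, norm_inv, norm_norm, ← hs, inv_mul_cancel₀ (ne_of_gt hs0)]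
      have hxy : x = s • y := by rw [hy, smul_inv_smul₀ (ne_of_gt hs0)]
      have hAx : A x = s • A y := (congrArg A hxy).trans (hAsmul s y)
      have key : (Matrix.trace (A x * A x)).re = s^2 * (Matrix.trace (A y * A y)).re := by
        rw [hAx, Matrix.smul_mul, Matrix.mul_smul, Matrix.trace_smul, Matrix.trace_smul,
          Complex.smul_re, Complex.smul_re]
        simp only [smul_eq_mul]
        ring
      have hyS : y ∈ Metric.sphere (0 : Fin q → ℝ) 1 := by
        rw [mem_sphere_zero_iff_norm]; exact hyn
      have hmin2 : c ≤ (Matrix.trace (A y * A y)).re := hminc hyS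
      rw [← hpsi x, key]
      have hss : (0:ℝ) ≤ s^2 := sq_nonneg s
      nlinarith [hmin2, hss]
  -- final assembly
  intro r
  set S : ℝ := r + p * M^2 with hSdef
  set s0 : ℝ := max (S/m) (2*M + 2*Real.sqrt (max (S + M^2) 0)) with hs0def
  refine ⟨Real.sqrt ((p:ℝ) / c) * |s0| + 1, fun x hR => ?_⟩
  have hVeq : convPotential C b x = ∑ i, (Real.exp (ev x i) - ev x i * yre x i) := by
    unfold convPotential
    rw [show (Matrix.trace (NormedSpace.exp (∑ ι, x ι • C ι))).re
        = ∑ i, Real.exp (ev x i) from trace_exp_herm _ (hA x),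
      show ∑ ι, x ι * b ι = ∑ i, ev x i * yre x i from
        (hsum x).trans (trace_mul_herm _ (hA x) X)]
    rw [← Finset.sum_sub_distrib]
  obtain ⟨i0, -, hi0⟩ := Finset.exists_max_image Finset.univ (fun i => (ev x i)^2)
    ⟨⟨0, hp⟩, Finset.mem_univ _⟩
  set t : ℝ := ev x i0 with htdef
  have hsum_le : ∑ i, (ev x i)^2 ≤ (p:ℝ) * t^2 := by
    calc ∑ i, (ev x i)^2 ≤ ∑ _i : Fin p, t^2 :=
          Finset.sum_le_sum (fun i _ => hi0 i (Finset.mem_univ i))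
      _ = (p:ℝ) * t^2 := by
          rw [Finset.sum_const, Finset.card_univ, Fintype.card_fin, nsmul_eq_mul]
  have hratio : c * ‖x‖^2 ≤ (p:ℝ) * t^2 := le_trans (hcineq x) hsum_le
  have hpR : (0:ℝ) < (p:ℝ) := Nat.cast_pos.2 hp
  have habs : s0 ≤ |t| := by
    have hnn : (0:ℝ) ≤ Real.sqrt ((p:ℝ)/c) * |s0| := by positivity
    have h2 : (Real.sqrt ((p:ℝ)/c) * |s0|)^2 ≤ ‖x‖^2 :=
      pow_le_pow_left₀ hnn (by linarith) 2
    rw [mul_pow, Real.sq_sqrt (by positivity), sq_abs] at h2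
    have h5 := mul_le_mul_of_nonneg_left h2 (le_of_lt hc0)
    have h4 : c * ((p:ℝ)/c * s0^2) = (p:ℝ) * s0^2 := by field_simp
    have h6 : s0^2 ≤ t^2 := by nlinarith [hratio, h5, h4, hpR]
    refine le_trans (le_abs_self s0) ?_
    rw [← Real.sqrt_sq_eq_abs, ← Real.sqrt_sq_eq_abs]
    exact Real.sqrt_le_sqrt h6
  have hfloor : ∀ i, -(M^2) ≤ Real.exp (ev x i) - ev x i * yre x i := fun i =>
    floor_bound hm0 hM0 (hlow x i) (hupp x i)
  have hspike : S ≤ Real.exp t - t * yre x i0 :=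
    spike_bound hm0 hM0 (hlow x i0) (hupp x i0) (by rw [← hs0def]; exact habs)
  rw [hVeq]
  have hsplit : ∑ i, (Real.exp (ev x i) - ev x i * yre x i)
      = (∑ i ∈ Finset.univ.erase i0, (Real.exp (ev x i) - ev x i * yre x i))
        + (Real.exp t - t * yre x i0) :=
    (Finset.sum_erase_add _ _ (Finset.mem_univ i0)).symm
  rw [hsplit]
  have hcard : ((Finset.univ.erase i0).card : ℝ) * (-(M^2))
      ≤ ∑ i ∈ Finset.univ.erase i0, (Real.exp (ev x i) - ev x i * yre x i) := by
    have := Finset.card_nsmul_le_sum (Finset.univ.erase i0)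
      (fun i => Real.exp (ev x i) - ev x i * yre x i) (-(M^2)) (fun i _ => hfloor i)
    rwa [nsmul_eq_mul] at this
  have hle : ((Finset.univ.erase i0).card : ℝ) ≤ (p:ℝ) := by
    have h1 : (Finset.univ.erase i0).card ≤ (Finset.univ : Finset (Fin p)).card :=
      Finset.card_le_card (Finset.erase_subset _ _)
    rw [Finset.card_univ, Fintype.card_fin] at h1
    exact_mod_cast h1
  have hcard2 : -((p:ℝ) * M^2) ≤ ((Finset.univ.erase i0).card : ℝ) * (-(M^2)) := by
    have h2 : ((Finset.univ.erase i0).card : ℝ) * M^2 ≤ (p:ℝ) * M^2 :=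
      mul_le_mul_of_nonneg_right hle (sq_nonneg M)
    linarith
  have : S = r + (p:ℝ) * M^2 := hSdef
  linarith [hspike, hcard, hcard2]
end

section
/- Let p, q be positive integers, let C(1), …, C(q) be selfadjoint (Hermitian) p×p complex matrices that are linearly independent over ℝ, and let b(1), …, b(q) be real numbers. Define V : ℝ^q → ℝ by V(x) = tr(exp(Σ_{ι=1}^q x(ι)·C(ι))) − Σ_{ι=1}^q x(ι)·b(ι). If V is coercive (V(x) → +∞ as ‖x‖ → ∞), then V attains a global minimum at some point x⁰ ∈ ℝ^q, and the matrix X₀ = exp(Σ_{ι=1}^q x⁰(ι)·C(ι)) is positive definite and satisfies tr(C(ι)·X₀) = b(ι) for all ι = 1, …, q. -/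
open scoped Matrix ComplexOrder

open NormedSpace

section aux
variable {p : ℕ}
attribute [local instance] Matrix.linftyOpNormedRing Matrix.linftyOpNormedAlgebra

noncomputable def traceCLM (p : ℕ) : Matrix (Fin p) (Fin p) ℂ →L[ℂ] ℂ :=
  LinearMap.toContinuousLinearMap (Matrix.traceLinearMap (Fin p) ℂ ℂ)

@[simp] lemma traceCLM_apply (M : Matrix (Fin p) (Fin p) ℂ) :
    traceCLM p M = Matrix.trace M := rfl

lemma hasDerivAt_pow_line (A B : Matrix (Fin p) (Fin p) ℂ) (n : ℕ) (t : ℝ) :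
    HasDerivAt (fun s : ℝ => (A + s • B) ^ n)
      (∑ i ∈ Finset.range n, (A + t • B) ^ i * B * (A + t • B) ^ (n - 1 - i)) t := by
  induction n with
  | zero => simp only [pow_zero, Finset.range_zero, Finset.sum_empty]; exact hasDerivAt_const t _
  | succ m ih =>
      have hM : HasDerivAt (fun s : ℝ => A + s • B) B t := by
        have h0 := ((hasDerivAt_id t).smul_const B).const_add A
        rw [one_smul] at h0
        exact h0
      have h := ih.mul hM
      simp only [Pi.mul_def, ← pow_succ] at h
      refine h.congr_deriv (Eq.symm ?_)
      rw [Finset.sum_range_succ, Finset.sum_mul]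
      congr 1
      · refine Finset.sum_congr rfl fun i hi => ?_
        rw [Finset.mem_range] at hi
        rw [mul_assoc, mul_assoc, ← pow_succ, mul_assoc]
        congr 3
        omega
      · simp

lemma trace_hasDerivAt_pow (A B : Matrix (Fin p) (Fin p) ℂ) (m : ℕ) (t : ℝ) :
    HasDerivAt (fun s : ℝ => Matrix.trace ((A + s • B) ^ (m + 1)))
      ((m + 1 : ℂ) * Matrix.trace (B * (A + t • B) ^ m)) t := by
  classical
  have h := ((traceCLM p).restrictScalars ℝ).hasFDerivAt.comp_hasDerivAt t
    (hasDerivAt_pow_line A B (m + 1) t)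
  have key : ((traceCLM p).restrictScalars ℝ)
      (∑ i ∈ Finset.range (m + 1), (A + t • B) ^ i * B * (A + t • B) ^ (m + 1 - 1 - i))
      = (m + 1 : ℂ) * Matrix.trace (B * (A + t • B) ^ m) := by
    simp only [ContinuousLinearMap.coe_restrictScalars', traceCLM_apply, map_sum]
    have e : ∀ i ∈ Finset.range (m + 1),
        Matrix.trace ((A + t • B) ^ i * B * (A + t • B) ^ (m + 1 - 1 - i))
          = Matrix.trace (B * (A + t • B) ^ m) := by
      intro i hi
      rw [Finset.mem_range] at hi
      rw [Matrix.trace_mul_cycle, ← pow_add]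
      have : m + 1 - 1 - i + i = m := by omega
      rw [this, Matrix.trace_mul_comm]
    rw [Finset.sum_congr rfl e, Finset.sum_const, Finset.card_range, nsmul_eq_mul]
    push_cast
    ring
  rw [← key]
  exact h

lemma trace_exp_hasDerivAt (A B : Matrix (Fin p) (Fin p) ℂ) (t₀ : ℝ) :
    HasDerivAt (fun t : ℝ => Matrix.trace (exp (A + t • B)))
      (Matrix.trace (B * exp (A + t₀ • B))) t₀ := by
  classical
  set ρ : ℝ := ‖A‖ + (|t₀| + 1) * ‖B‖ with hρ
  set Ctr : ℝ := @norm _ ContinuousLinearMap.hasOpNorm (traceCLM p) with hCtr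
  have hCtr0 : (0:ℝ) ≤ Ctr := norm_nonneg _
  set g : ℕ → ℝ → ℂ := fun n t => ((n.factorial : ℂ))⁻¹ * Matrix.trace ((A + t • B) ^ n)
    with hg_def
  set g' : ℕ → ℝ → ℂ := fun n t =>
    match n with
    | 0 => 0
    | (m + 1) => ((m.factorial : ℂ))⁻¹ * Matrix.trace (B * (A + t • B) ^ m) with hg'_def
  set u : ℕ → ℝ := fun n =>
    match n with
    | 0 => 0
    | (m + 1) => Ctr * ‖B‖ * (ρ ^ m / m.factorial) with hu_def
  have hu : Summable u := by
    apply (summable_nat_add_iff 1).mp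
    simpa using (Real.summable_pow_div_factorial ρ).mul_left (Ctr * ‖B‖)
  have hg : ∀ n (t : ℝ), HasDerivAt (g n) (g' n t) t := by
    intro n t
    match n with
    | 0 =>
        simpa [hg_def] using
          (hasDerivAt_const t ((((0:ℕ).factorial : ℂ))⁻¹
            * Matrix.trace ((1 : Matrix (Fin p) (Fin p) ℂ))))
    | (m + 1) =>
        have h := (trace_hasDerivAt_pow A B m t).const_mul (((m + 1).factorial : ℂ))⁻¹
        have hm1 : ((m:ℂ) + 1) ≠ 0 := Nat.cast_add_one_ne_zero m
        have hmf : ((m.factorial : ℂ)) ≠ 0 :=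
          Nat.cast_ne_zero.mpr m.factorial_ne_zero
        have e : (((m + 1).factorial : ℂ))⁻¹ * ((m + 1 : ℂ) * Matrix.trace (B * (A + t • B) ^ m))
            = ((m.factorial : ℂ))⁻¹ * Matrix.trace (B * (A + t • B) ^ m) := by
          have hf : (((m + 1).factorial : ℂ)) = ((m:ℂ) + 1) * (m.factorial : ℂ) := by
            rw [Nat.factorial_succ]; push_cast; ring
          rw [hf, mul_inv]
          field_simp
        rw [e] at h
        exact h
  have hnorm : ∀ (t : ℝ), t ∈ Metric.ball t₀ 1 → ‖A + t • B‖ ≤ ρ := by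
    intro t ht
    rw [Metric.mem_ball, Real.dist_eq] at ht
    refine (norm_add_le _ _).trans ?_
    rw [hρ, norm_smul, Real.norm_eq_abs]
    have : |t| ≤ |t₀| + 1 := by
      have := abs_sub_abs_le_abs_sub t t₀
      linarith
    gcongr
  have htrb : ∀ (M : Matrix (Fin p) (Fin p) ℂ), ‖Matrix.trace M‖ ≤ Ctr * ‖M‖ := by
    intro M
    exact (traceCLM p).le_opNorm M
  have hg' : ∀ n (t : ℝ), t ∈ Metric.ball t₀ 1 → ‖g' n t‖ ≤ u n := by
    intro n t ht
    have hρ0 : (0:ℝ) ≤ ρ := by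
      rw [hρ]; positivity
    match n with
    | 0 => simp [hg'_def, hu_def]
    | (m + 1) =>
        show ‖((m.factorial : ℂ))⁻¹ * Matrix.trace (B * (A + t • B) ^ m)‖
            ≤ Ctr * ‖B‖ * (ρ ^ m / m.factorial)
        have h2 : ‖Matrix.trace (B * (A + t • B) ^ m)‖ ≤ Ctr * ‖B‖ * ρ ^ m := by
          match m with
          | 0 =>
              simpa using (htrb B).trans (le_of_eq (by ring))
          | (k + 1) =>
              calc ‖Matrix.trace (B * (A + t • B) ^ (k + 1))‖
                  ≤ Ctr * ‖B * (A + t • B) ^ (k + 1)‖ := htrb _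
                _ ≤ Ctr * (‖B‖ * ‖(A + t • B) ^ (k + 1)‖) :=
                    mul_le_mul_of_nonneg_left (norm_mul_le _ _) hCtr0
                _ ≤ Ctr * (‖B‖ * ρ ^ (k + 1)) := by
                    have hpow : ‖(A + t • B) ^ (k + 1)‖ ≤ ρ ^ (k + 1) :=
                      (norm_pow_le' _ k.succ_pos).trans
                        (pow_le_pow_left₀ (norm_nonneg _) (hnorm t ht) _)
                    gcongr
                _ = Ctr * ‖B‖ * ρ ^ (k + 1) := by ring
        calc ‖((m.factorial : ℂ))⁻¹ * Matrix.trace (B * (A + t • B) ^ m)‖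
            = ‖Matrix.trace (B * (A + t • B) ^ m)‖ * ((m.factorial : ℝ))⁻¹ := by
              rw [norm_mul, norm_inv, Complex.norm_natCast]; ring
          _ ≤ (Ctr * ‖B‖ * ρ ^ m) * ((m.factorial : ℝ))⁻¹ :=
              mul_le_mul_of_nonneg_right h2 (by positivity)
          _ = Ctr * ‖B‖ * (ρ ^ m / m.factorial) := by ring
  have hball : t₀ ∈ Metric.ball t₀ 1 := Metric.mem_ball_self one_pos
  have hg0 : Summable fun n => g n t₀ := by
    have hs := NormedSpace.expSeries_summable' (𝕂 := ℂ) (A + t₀ • B)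
    have h2 := hs.map ((traceCLM p).toLinearMap.toAddMonoidHom) (traceCLM p).continuous
    refine h2.congr fun n => ?_
    simp [hg_def, Matrix.trace_smul, smul_eq_mul]
  have main := hasDerivAt_tsum_of_isPreconnected hu Metric.isOpen_ball
    (convex_ball t₀ 1).isPreconnected (fun n y _ => hg n y) hg' hball hg0 hball
  have hfun : (fun t : ℝ => Matrix.trace (exp (A + t • B))) = fun z => ∑' n, g n z := by
    funext s
    rw [NormedSpace.exp_eq_tsum ℂ]
    rw [show Matrix.trace (∑' n : ℕ, ((n.factorial : ℂ))⁻¹ • (A + s • B) ^ n)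
        = traceCLM p (∑' n : ℕ, ((n.factorial : ℂ))⁻¹ • (A + s • B) ^ n) from rfl]
    rw [(traceCLM p).map_tsum (NormedSpace.expSeries_summable' (𝕂 := ℂ) (A + s • B))]
    congr 1
    funext n
    simp [hg_def, Matrix.trace_smul, smul_eq_mul]
  have hsum' : Summable fun n => g' n t₀ :=
    Summable.of_norm_bounded hu (fun n => hg' n t₀ hball)
  have hval : Matrix.trace (B * exp (A + t₀ • B)) = ∑' n, g' n t₀ := by
    rw [hsum'.tsum_eq_zero_add]
    have h0 : g' 0 t₀ = 0 := rfl
    rw [h0, zero_add, NormedSpace.exp_eq_tsum ℂ]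
    set L2 := (traceCLM p).comp (ContinuousLinearMap.mul ℂ (Matrix (Fin p) (Fin p) ℂ) B)
      with hL2
    rw [show Matrix.trace (B * ∑' n : ℕ, ((n.factorial : ℂ))⁻¹ • (A + t₀ • B) ^ n)
        = L2 (∑' n : ℕ, ((n.factorial : ℂ))⁻¹ • (A + t₀ • B) ^ n) from rfl]
    refine (L2.map_tsum (NormedSpace.expSeries_summable' (𝕂 := ℂ) (A + t₀ • B))).trans ?_
    congr 1
    funext n
    show Matrix.trace (B * ((n.factorial : ℂ))⁻¹ • (A + t₀ • B) ^ n) = g' (n + 1) t₀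
    rw [Matrix.mul_smul, Matrix.trace_smul, smul_eq_mul]
  rw [hfun, hval]
  exact main

end aux

section posdef
variable {p : ℕ}
attribute [local instance] Matrix.linftyOpNormedRing Matrix.linftyOpNormedAlgebra

lemma posDef_exp_of_isHermitian (A : Matrix (Fin p) (Fin p) ℂ) (hA : A.IsHermitian) :
    (exp A).PosDef := by
  classical
  set H : Matrix (Fin p) (Fin p) ℂ := (1/2 : ℝ) • A with hH_def
  have hH : H.IsHermitian := by
    rw [Matrix.IsHermitian, hH_def, Matrix.conjTranspose_smul, hA.eq, star_trivial]
  have hsplit : A = H + H := by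
    rw [hH_def, ← add_smul]
    norm_num
  have hexpH : (exp H).conjTranspose = exp H := by
    rw [← Matrix.exp_conjTranspose, hH.eq]
  have hfac : exp A = (exp H)ᴴ * exp H := by
    rw [hsplit, Matrix.exp_add_of_commute H H (Commute.refl H), hexpH]
  have hpsd : (exp A).PosSemidef := by
    rw [hfac]; exact Matrix.posSemidef_conjTranspose_mul_self _
  exact hpsd.posDef_iff_isUnit.mpr (Matrix.isUnit_exp A)

end posdef

lemma convPotential_continuous {p q : ℕ} (C : Fin q → Matrix (Fin p) (Fin p) ℂ)
    (b : Fin q → ℝ) : Continuous (convPotential C b) := by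
  letI : SeminormedRing (Matrix (Fin p) (Fin p) ℂ) := Matrix.linftyOpSemiNormedRing
  letI : NormedRing (Matrix (Fin p) (Fin p) ℂ) := Matrix.linftyOpNormedRing
  letI : NormedAlgebra ℂ (Matrix (Fin p) (Fin p) ℂ) := Matrix.linftyOpNormedAlgebra
  letI : NormedAlgebra ℚ (Matrix (Fin p) (Fin p) ℂ) := Matrix.linftyOpNormedAlgebra
  unfold convPotential
  refine Continuous.sub ?_ ?_
  · refine Complex.continuous_re.comp ?_
    refine Continuous.matrix_trace ?_
    refine NormedSpace.exp_continuous.comp ?_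
    exact continuous_finset_sum _ fun ι _ => (continuous_apply ι).smul continuous_const
  · exact continuous_finset_sum _ fun ι _ => (continuous_apply ι).mul continuous_const

theorem min_attained_and_solution_of_coercive {p q : ℕ} (hp : 0 < p) (hq : 0 < q)
    (C : Fin q → Matrix (Fin p) (Fin p) ℂ) (hC : ∀ ι, (C ι).IsHermitian)
    (hind : LinearIndependent ℝ C) (b : Fin q → ℝ)
    (hcoercive : ∀ r : ℝ, ∃ R : ℝ, ∀ x : Fin q → ℝ, R ≤ ‖x‖ → r ≤ convPotential C b x) :
    ∃ x0 : Fin q → ℝ, (∀ x : Fin q → ℝ, convPotential C b x0 ≤ convPotential C b x) ∧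
      (NormedSpace.exp (∑ ι, x0 ι • C ι)).PosDef ∧
      ∀ ι, Matrix.trace (C ι * NormedSpace.exp (∑ ι', x0 ι' • C ι')) = (b ι : ℂ) := by
  classical
  obtain ⟨R, hR⟩ := hcoercive (convPotential C b 0)
  set R' : ℝ := max R 0 with hR'
  have h0K : (0 : Fin q → ℝ) ∈ Metric.closedBall (0 : Fin q → ℝ) R' := by
    rw [Metric.mem_closedBall, dist_self]
    exact le_max_right R 0
  obtain ⟨x0, hx0K, hmin⟩ := (isCompact_closedBall (0 : Fin q → ℝ) R').exists_isMinOn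
    ⟨0, h0K⟩ (convPotential_continuous C b).continuousOn
  have hglobal : ∀ x, convPotential C b x0 ≤ convPotential C b x := by
    intro x
    by_cases hx : x ∈ Metric.closedBall (0 : Fin q → ℝ) R'
    · exact hmin hx
    · have hxnorm : R ≤ ‖x‖ := by
        rw [Metric.mem_closedBall, dist_zero_right, not_le] at hx
        exact le_trans (le_max_left _ _) hx.le
      exact le_trans (hmin h0K) (hR x hxnorm)
  have hS : (∑ ι', x0 ι' • C ι').IsHermitian := by
    rw [Matrix.IsHermitian, Matrix.conjTranspose_sum]
    refine Finset.sum_congr rfl fun ι' _ => ?_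
    rw [Matrix.conjTranspose_smul, (hC ι').eq, star_trivial]
  refine ⟨x0, hglobal, posDef_exp_of_isHermitian _ hS, fun ι => ?_⟩
  set S : Matrix (Fin p) (Fin p) ℂ := ∑ ι', x0 ι' • C ι' with hS_def
  -- sum decompositions along the line x0 + t • (Pi.single ι 1 : Fin q → ℝ)
  have hsum : ∀ t : ℝ, (∑ ι', (x0 + t • (Pi.single ι 1 : Fin q → ℝ)) ι' • C ι') = S + t • C ι := by
    intro t
    rw [hS_def]
    have : ∀ ι', (x0 + t • (Pi.single ι 1 : Fin q → ℝ)) ι' • C ι'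
        = x0 ι' • C ι' + (if ι' = ι then t • C ι' else 0) := by
      intro ι'
      by_cases h : ι' = ι
      · subst h; simp [add_smul]
      · simp [h, Pi.single_apply, add_smul]
    rw [Finset.sum_congr rfl fun ι' _ => this ι', Finset.sum_add_distrib]
    congr 1
    rw [Finset.sum_ite_eq' Finset.univ ι (fun ι' => t • C ι')]
    simp
  have hlin : ∀ t : ℝ, (∑ ι', (x0 + t • (Pi.single ι 1 : Fin q → ℝ)) ι' * b ι')
      = (∑ ι', x0 ι' * b ι') + t * b ι := by
    intro t
    have : ∀ ι', (x0 + t • (Pi.single ι 1 : Fin q → ℝ)) ι' * b ι'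
        = x0 ι' * b ι' + (if ι' = ι then t * b ι' else 0) := by
      intro ι'
      by_cases h : ι' = ι
      · subst h; simp [add_mul]
      · simp [h, Pi.single_apply]
    rw [Finset.sum_congr rfl fun ι' _ => this ι', Finset.sum_add_distrib]
    congr 1
    rw [Finset.sum_ite_eq' Finset.univ ι (fun ι' => t * b ι')]
    simp
  -- derivative of φ at 0
  have hkey := trace_exp_hasDerivAt S (C ι) 0
  have hkey0 : HasDerivAt (fun t : ℝ => Matrix.trace (NormedSpace.exp (S + t • C ι)))
      (Matrix.trace (C ι * NormedSpace.exp S)) 0 := by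
    simpa using hkey
  have h1 : HasDerivAt (fun t : ℝ => (Matrix.trace (NormedSpace.exp (S + t • C ι))).re)
      (Matrix.trace (C ι * NormedSpace.exp S)).re 0 :=
    (Complex.reCLM.hasFDerivAt.comp_hasDerivAt 0 hkey0)
  have h2 : HasDerivAt (fun t : ℝ => (∑ ι', x0 ι' * b ι') + t * b ι) (b ι) 0 := by
    simpa using (((hasDerivAt_id (0:ℝ)).mul_const (b ι)).const_add (∑ ι', x0 ι' * b ι'))
  have hD : HasDerivAt (fun t : ℝ => convPotential C b (x0 + t • (Pi.single ι 1 : Fin q → ℝ)))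
      ((Matrix.trace (C ι * NormedSpace.exp S)).re - b ι) 0 := by
    have h3 := h1.sub h2
    refine h3.congr_of_eventuallyEq (Filter.Eventually.of_forall fun t => ?_)
    show (Matrix.trace (NormedSpace.exp
        (∑ ι', (x0 + t • (Pi.single ι 1 : Fin q → ℝ)) ι' • C ι'))).re
        - ∑ ι', (x0 + t • (Pi.single ι 1 : Fin q → ℝ)) ι' * b ι' = _
    rw [hsum t, hlin t]
    rfl
  have hloc : IsLocalMin (fun t : ℝ => convPotential C b (x0 + t • (Pi.single ι 1 : Fin q → ℝ))) 0 := by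
    refine Filter.Eventually.of_forall fun t => ?_
    simpa using hglobal (x0 + t • (Pi.single ι 1 : Fin q → ℝ))
  have hzero := hloc.hasDerivAt_eq_zero hD
  have hre : (Matrix.trace (C ι * NormedSpace.exp S)).re = b ι := by
    have := sub_eq_zero.mp hzero
    linarith [this]
  have hXh : (NormedSpace.exp S).IsHermitian := by
    rw [Matrix.IsHermitian, ← Matrix.exp_conjTranspose, hS.eq]
  have hreal : star (Matrix.trace (C ι * NormedSpace.exp S))
      = Matrix.trace (C ι * NormedSpace.exp S) := by
    calc star (Matrix.trace (C ι * NormedSpace.exp S))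
        = Matrix.trace ((C ι * NormedSpace.exp S)ᴴ) := (Matrix.trace_conjTranspose _).symm
      _ = Matrix.trace ((NormedSpace.exp S) * (C ι)) := by
          rw [Matrix.conjTranspose_mul, (hC ι).eq, hXh.eq]
      _ = Matrix.trace (C ι * NormedSpace.exp S) := Matrix.trace_mul_comm _ _
  have him : (Matrix.trace (C ι * NormedSpace.exp S)).im = 0 := by
    rw [← Complex.conj_eq_iff_im]
    exact hreal
  apply Complex.ext
  · simpa using hre
  · simpa using him
end

section
/- Let p, q be positive integers, let C(1), …, C(q) be selfadjoint (Hermitian) p×p complex matrices that are linearly independent over ℝ, and let b(1), …, b(q) be real numbers. Then the function V : ℝ^q → ℝ defined by V(x) = tr(exp(Σ_{ι=1}^q x(ι)·C(ι))) − Σ_{ι=1}^q x(ι)·b(ι) is strictly convex on ℝ^q. -/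
open scoped Matrix

open Matrix Finset

namespace ConvPotentialAux

variable {p : ℕ}

/-- Trace of the exponential of a Hermitian matrix equals the sum of exponentials of
its eigenvalues. -/
lemma texp_eq {A : Matrix (Fin p) (Fin p) ℂ} (hA : A.IsHermitian) :
    (Matrix.trace (NormedSpace.exp A)).re = ∑ i, Real.exp (hA.eigenvalues i) := by
  set U : Matrix (Fin p) (Fin p) ℂ := (hA.eigenvectorUnitary : Matrix (Fin p) (Fin p) ℂ) with hU
  have hU1 : U * star U = 1 := Matrix.mem_unitaryGroup_iff.mp hA.eigenvectorUnitary.2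
  have hU2 : star U * U = 1 := Matrix.mem_unitaryGroup_iff'.mp hA.eigenvectorUnitary.2
  have hinv : U⁻¹ = star U := Matrix.inv_eq_right_inv hU1
  have hspec := hA.spectral_theorem
  rw [Unitary.conjStarAlgAut_apply, ← hU, ← hinv] at hspec
  conv_lhs => rw [hspec]
  rw [Matrix.exp_conj _ _ ⟨⟨U, star U, hU1, hU2⟩, rfl⟩,
    Matrix.exp_diagonal, hinv, Matrix.trace_mul_cycle,
    show (↑(⟨U, star U, hU1, hU2⟩ : (Matrix (Fin p) (Fin p) ℂ)ˣ) : Matrix (Fin p) (Fin p) ℂ) = U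
      from rfl, hU2, Matrix.one_mul, Matrix.trace_diagonal]
  rw [Complex.re_sum]
  refine Finset.sum_congr rfl fun i _ => ?_
  have : (NormedSpace.exp) ((RCLike.ofReal ∘ hA.eigenvalues) i : ℂ) =
      Complex.exp ((hA.eigenvalues i : ℝ) : ℂ) := by
    rw [Complex.exp_eq_exp_ℂ]; rfl
  rw [Pi.exp_def]
  show Complex.re (NormedSpace.exp ((RCLike.ofReal ∘ hA.eigenvalues) i)) = Real.exp (hA.eigenvalues i)
  rw [this, Complex.exp_ofReal_re]


lemma key_form {A : Matrix (Fin p) (Fin p) ℂ} (hA : A.IsHermitian)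
    {V : Matrix (Fin p) (Fin p) ℂ} (hV : V ∈ Matrix.unitaryGroup (Fin p) ℂ) :
    ∃ W : Matrix (Fin p) (Fin p) ℂ, W * star W = 1 ∧ star W * W = 1 ∧
      star V * A * V =
        W * Matrix.diagonal (RCLike.ofReal ∘ hA.eigenvalues) * star W := by
  set U : Matrix (Fin p) (Fin p) ℂ := (hA.eigenvectorUnitary : Matrix (Fin p) (Fin p) ℂ) with hU
  have hU1 : U * star U = 1 := Matrix.mem_unitaryGroup_iff.mp hA.eigenvectorUnitary.2
  have hU2 : star U * U = 1 := Matrix.mem_unitaryGroup_iff'.mp hA.eigenvectorUnitary.2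
  have hV1 : V * star V = 1 := Matrix.mem_unitaryGroup_iff.mp hV
  have hV2 : star V * V = 1 := Matrix.mem_unitaryGroup_iff'.mp hV
  refine ⟨star V * U, ?_, ?_, ?_⟩
  · rw [Matrix.star_mul, star_star, mul_assoc, ← mul_assoc U, hU1, one_mul, hV2]
  · rw [Matrix.star_mul, star_star, mul_assoc, ← mul_assoc V, hV1, one_mul, hU2]
  · rw [Matrix.star_mul, star_star]
    conv_lhs => rw [hA.spectral_theorem, Unitary.conjStarAlgAut_apply, ← hU]
    simp only [mul_assoc]

lemma peierls {A : Matrix (Fin p) (Fin p) ℂ} (hA : A.IsHermitian)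
    {V : Matrix (Fin p) (Fin p) ℂ} (hV : V ∈ Matrix.unitaryGroup (Fin p) ℂ) :
    ∑ i, Real.exp (((star V * A * V) i i).re) ≤ ∑ i, Real.exp (hA.eigenvalues i) := by
  obtain ⟨W, hW1, hW2, hform⟩ := key_form hA hV
  have hrow : ∀ i, ∑ j, Complex.normSq (W i j) = 1 := by
    intro i
    have h := Matrix.ext_iff.mpr hW1 i i
    rw [Matrix.mul_apply, Matrix.one_apply_eq] at h
    have h2 : ∀ j, W i j * star W j i = (Complex.normSq (W i j) : ℂ) := fun j => by
      rw [Matrix.star_apply, Complex.star_def, Complex.mul_conj]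
    rw [Finset.sum_congr rfl fun j _ => h2 j] at h
    exact_mod_cast h
  have hcol : ∀ j, ∑ i, Complex.normSq (W i j) = 1 := by
    intro j
    have h := Matrix.ext_iff.mpr hW2 j j
    rw [Matrix.mul_apply, Matrix.one_apply_eq] at h
    have h2 : ∀ i, star W j i * W i j = (Complex.normSq (W i j) : ℂ) := fun i => by
      rw [Matrix.star_apply, Complex.star_def, mul_comm, Complex.mul_conj]
    rw [Finset.sum_congr rfl fun i _ => h2 i] at h
    exact_mod_cast h
  have hdiag : ∀ i, ((star V * A * V) i i).re =
      ∑ j, Complex.normSq (W i j) * hA.eigenvalues j := by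
    intro i
    rw [hform, Matrix.mul_apply]
    have h2 : ∀ j, (W * Matrix.diagonal (RCLike.ofReal ∘ hA.eigenvalues) : Matrix (Fin p) (Fin p) ℂ) i j * star W j i =
        ((Complex.normSq (W i j) * hA.eigenvalues j : ℝ) : ℂ) := fun j => by
      rw [Matrix.mul_diagonal, Matrix.star_apply, Complex.star_def]
      have : (RCLike.ofReal ∘ hA.eigenvalues) j = ((hA.eigenvalues j : ℝ) : ℂ) := rfl
      rw [this]
      push_cast
      rw [show W i j * (hA.eigenvalues j : ℂ) * (starRingEnd ℂ) (W i j)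
          = (W i j * (starRingEnd ℂ) (W i j)) * (hA.eigenvalues j : ℂ) by ring,
        Complex.mul_conj]
    rw [Finset.sum_congr rfl fun j _ => h2 j, ← Complex.ofReal_sum, Complex.ofReal_re]
  calc ∑ i, Real.exp (((star V * A * V) i i).re)
      = ∑ i, Real.exp (∑ j, Complex.normSq (W i j) • hA.eigenvalues j) := by
        simp only [smul_eq_mul]
        exact Finset.sum_congr rfl fun i _ => by rw [hdiag]
    _ ≤ ∑ i, ∑ j, Complex.normSq (W i j) • Real.exp (hA.eigenvalues j) := by
        refine Finset.sum_le_sum fun i _ => ?_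
        exact convexOn_exp.map_sum_le (fun j _ => Complex.normSq_nonneg _) (hrow i)
          (fun j _ => Set.mem_univ _)
    _ = ∑ i, Real.exp (hA.eigenvalues i) := by
        rw [Finset.sum_comm]
        refine Finset.sum_congr rfl fun j _ => ?_
        simp only [smul_eq_mul]
        rw [← Finset.sum_mul, hcol j, one_mul]


lemma peierls_eq {A : Matrix (Fin p) (Fin p) ℂ} (hA : A.IsHermitian)
    {V : Matrix (Fin p) (Fin p) ℂ} (hV : V ∈ Matrix.unitaryGroup (Fin p) ℂ)
    (heq : ∑ i, Real.exp (((star V * A * V) i i).re) = ∑ i, Real.exp (hA.eigenvalues i)) :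
    A * V = V * Matrix.diagonal (fun i => ((((star V * A * V) i i).re : ℝ) : ℂ)) := by
  have hV1 : V * star V = 1 := Matrix.mem_unitaryGroup_iff.mp hV
  obtain ⟨W, hW1, hW2, hform⟩ := key_form hA hV
  have hrow : ∀ i, ∑ j, Complex.normSq (W i j) = 1 := by
    intro i
    have h := Matrix.ext_iff.mpr hW1 i i
    rw [Matrix.mul_apply, Matrix.one_apply_eq] at h
    have h2 : ∀ j, W i j * star W j i = (Complex.normSq (W i j) : ℂ) := fun j => by
      rw [Matrix.star_apply, Complex.star_def, Complex.mul_conj]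
    rw [Finset.sum_congr rfl fun j _ => h2 j] at h
    exact_mod_cast h
  have hcol : ∀ j, ∑ i, Complex.normSq (W i j) = 1 := by
    intro j
    have h := Matrix.ext_iff.mpr hW2 j j
    rw [Matrix.mul_apply, Matrix.one_apply_eq] at h
    have h2 : ∀ i, star W j i * W i j = (Complex.normSq (W i j) : ℂ) := fun i => by
      rw [Matrix.star_apply, Complex.star_def, mul_comm, Complex.mul_conj]
    rw [Finset.sum_congr rfl fun i _ => h2 i] at h
    exact_mod_cast h
  have hdiag : ∀ i, ((star V * A * V) i i).re =
      ∑ j, Complex.normSq (W i j) * hA.eigenvalues j := by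
    intro i
    rw [hform, Matrix.mul_apply]
    have h2 : ∀ j, (W * Matrix.diagonal (RCLike.ofReal ∘ hA.eigenvalues) :
        Matrix (Fin p) (Fin p) ℂ) i j * star W j i =
        ((Complex.normSq (W i j) * hA.eigenvalues j : ℝ) : ℂ) := fun j => by
      rw [Matrix.mul_diagonal, Matrix.star_apply, Complex.star_def]
      have : (RCLike.ofReal ∘ hA.eigenvalues) j = ((hA.eigenvalues j : ℝ) : ℂ) := rfl
      rw [this]
      push_cast
      rw [show W i j * (hA.eigenvalues j : ℂ) * (starRingEnd ℂ) (W i j)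
          = (W i j * (starRingEnd ℂ) (W i j)) * (hA.eigenvalues j : ℂ) by ring,
        Complex.mul_conj]
    rw [Finset.sum_congr rfl fun j _ => h2 j, ← Complex.ofReal_sum, Complex.ofReal_re]
  set μ : Fin p → ℝ := fun i => ((star V * A * V) i i).re with hμ
  -- termwise equality in the summed Jensen inequality
  have hle : ∀ i ∈ Finset.univ, Real.exp (μ i) ≤
      ∑ j, Complex.normSq (W i j) * Real.exp (hA.eigenvalues j) := by
    intro i _
    have := convexOn_exp.map_sum_le (t := Finset.univ)
      (w := fun j => Complex.normSq (W i j)) (p := hA.eigenvalues)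
      (fun j _ => Complex.normSq_nonneg _) (hrow i) (fun j _ => Set.mem_univ _)
    simpa only [smul_eq_mul, ← hdiag i] using this
  have hsumg : ∑ i, ∑ j, Complex.normSq (W i j) * Real.exp (hA.eigenvalues j)
      = ∑ j, Real.exp (hA.eigenvalues j) := by
    rw [Finset.sum_comm]
    refine Finset.sum_congr rfl fun j _ => ?_
    rw [← Finset.sum_mul, hcol j, one_mul]
  have htermwise := (Finset.sum_eq_sum_iff_of_le hle).mp (heq.trans hsumg.symm)
  have hcond : ∀ i j, W i j ≠ 0 → hA.eigenvalues j = μ i := by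
    intro i j hne
    have hjeq : Real.exp (∑ j, Complex.normSq (W i j) • hA.eigenvalues j)
        = ∑ j, Complex.normSq (W i j) • Real.exp (hA.eigenvalues j) := by
      simpa only [smul_eq_mul, ← hdiag i] using htermwise i (Finset.mem_univ i)
    have h := (strictConvexOn_exp.map_sum_eq_iff' (t := Finset.univ)
      (w := fun j => Complex.normSq (W i j)) (p := hA.eigenvalues)
      (fun j _ => Complex.normSq_nonneg _) (hrow i) (fun j _ => Set.mem_univ _)).mp hjeq
    have h2 := h j (Finset.mem_univ j) (by simpa [Complex.normSq_eq_zero] using hne)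
    rw [h2]
    simp only [smul_eq_mul]
    exact (hdiag i).symm
  -- the conjugated matrix is diagonal
  have hkey : star V * A * V = Matrix.diagonal (fun i => ((μ i : ℝ) : ℂ)) := by
    ext i k
    rw [hform, Matrix.mul_apply]
    have h2 : ∀ j, (W * Matrix.diagonal (RCLike.ofReal ∘ hA.eigenvalues) :
        Matrix (Fin p) (Fin p) ℂ) i j * star W j k
        = ((μ k : ℝ) : ℂ) * (W i j * star (W k j)) := fun j => by
      rw [Matrix.mul_diagonal, Matrix.star_apply]
      by_cases hz : W k j = 0
      · rw [hz]; simp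
      · have : (RCLike.ofReal ∘ hA.eigenvalues) j = ((hA.eigenvalues j : ℝ) : ℂ) := rfl
        rw [this, hcond k j hz]
        ring
    rw [Finset.sum_congr rfl fun j _ => h2 j, ← Finset.mul_sum]
    have h3 : ∑ j, W i j * star (W k j) = (W * star W : Matrix (Fin p) (Fin p) ℂ) i k := by
      rw [Matrix.mul_apply]
      exact Finset.sum_congr rfl fun j _ => by rw [Matrix.star_apply]
    rw [h3, hW1, Matrix.diagonal_apply, Matrix.one_apply]
    split_ifs with h
    · subst h; rw [mul_one]
    · rw [mul_zero]
  have hfin : V * (star V * A * V) = A * V := by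
    rw [← mul_assoc, ← mul_assoc, hV1, one_mul]
  rw [← hfin]
  conv_lhs => rw [hkey]

end ConvPotentialAux

open ConvPotentialAux

theorem convPotential_strictConvex {p q : ℕ} (hp : 0 < p) (hq : 0 < q)
    (C : Fin q → Matrix (Fin p) (Fin p) ℂ) (hC : ∀ ι, (C ι).IsHermitian)
    (hind : LinearIndependent ℝ C) (b : Fin q → ℝ) :
    StrictConvexOn ℝ Set.univ (convPotential C b) := by
  refine ⟨convex_univ, ?_⟩
  intro x _ y _ hxy s t hs ht hst
  have herm : ∀ z : Fin q → ℝ, (∑ ι, z ι • C ι).IsHermitian := by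
    intro z
    show Matrix.conjTranspose _ = _
    rw [Matrix.conjTranspose_sum]
    exact Finset.sum_congr rfl fun ι _ => by
      rw [Matrix.conjTranspose_smul, star_trivial, hC ι]
  set A := ∑ ι, x ι • C ι with hA_def
  set B := ∑ ι, y ι • C ι with hB_def
  have hAh : A.IsHermitian := herm x
  have hBh : B.IsHermitian := herm y
  have hH_eq : ∑ ι, (s • x + t • y) ι • C ι = s • A + t • B := by
    rw [hA_def, hB_def, Finset.smul_sum, Finset.smul_sum, ← Finset.sum_add_distrib]
    refine Finset.sum_congr rfl fun ι _ => ?_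
    simp only [Pi.add_apply, Pi.smul_apply, smul_eq_mul]
    rw [add_smul, mul_smul, mul_smul]
  have hHh : (∑ ι, (s • x + t • y) ι • C ι).IsHermitian := herm _
  set V : Matrix (Fin p) (Fin p) ℂ :=
    (hHh.eigenvectorUnitary : Matrix (Fin p) (Fin p) ℂ) with hV_def
  have hV : V ∈ Matrix.unitaryGroup (Fin p) ℂ := hHh.eigenvectorUnitary.2
  have hV1 : V * star V = 1 := Matrix.mem_unitaryGroup_iff.mp hV
  set a : Fin p → ℝ := fun i => ((star V * A * V) i i).re with ha_def
  set bb : Fin p → ℝ := fun i => ((star V * B * V) i i).re with hbb_def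
  have hd : ∀ i, hHh.eigenvalues i = s * a i + t * bb i := by
    intro i
    have h1 := hHh.conjStarAlgAut_star_eigenvectorUnitary
    simp only [Unitary.conjStarAlgAut_apply, Unitary.coe_star, star_star] at h1
    rw [← hV_def] at h1
    have h3 : star V * (∑ ι, (s • x + t • y) ι • C ι) * V
        = s • (star V * A * V) + t • (star V * B * V) := by
      rw [hH_eq, Matrix.mul_add, Matrix.add_mul, Matrix.mul_smul, Matrix.mul_smul,
        Matrix.smul_mul, Matrix.smul_mul]
    have h2 : ((hHh.eigenvalues i : ℝ) : ℂ)
        = (s • (star V * A * V) + t • (star V * B * V)) i i := by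
      rw [← h3, h1, Matrix.diagonal_apply_eq]; rfl
    have h4 := congrArg Complex.re h2
    simp only [Complex.ofReal_re, Matrix.add_apply, Matrix.smul_apply, Complex.real_smul,
      Complex.add_re, Complex.mul_re, Complex.ofReal_re, Complex.ofReal_im, zero_mul,
      sub_zero] at h4
    exact h4
  -- sums of exponentials
  have hAe := texp_eq hAh
  have hBe := texp_eq hBh
  have hHe := texp_eq hHh
  have hPA : ∑ i, Real.exp (a i) ≤ ∑ i, Real.exp (hAh.eigenvalues i) := peierls hAh hV
  have hPB : ∑ i, Real.exp (bb i) ≤ ∑ i, Real.exp (hBh.eigenvalues i) := peierls hBh hV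
  have hptle : ∀ i, Real.exp (hHh.eigenvalues i)
      ≤ s * Real.exp (a i) + t * Real.exp (bb i) := by
    intro i
    rw [hd i]
    have := convexOn_exp.2 (Set.mem_univ (a i)) (Set.mem_univ (bb i)) hs.le ht.le hst
    simpa using this
  have hchain : ∑ i, Real.exp (hHh.eigenvalues i) ≤
      s * ∑ i, Real.exp (a i) + t * ∑ i, Real.exp (bb i) := by
    calc ∑ i, Real.exp (hHh.eigenvalues i)
        ≤ ∑ i, (s * Real.exp (a i) + t * Real.exp (bb i)) :=
          Finset.sum_le_sum fun i _ => hptle i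
      _ = _ := by rw [Finset.sum_add_distrib, ← Finset.mul_sum, ← Finset.mul_sum]
  have htot : ∑ i, Real.exp (hHh.eigenvalues i) ≤
      s * ∑ i, Real.exp (hAh.eigenvalues i) + t * ∑ i, Real.exp (hBh.eigenvalues i) := by
    refine hchain.trans ?_
    have := mul_le_mul_of_nonneg_left hPA hs.le
    have := mul_le_mul_of_nonneg_left hPB ht.le
    linarith
  have hfinal : ∑ i, Real.exp (hHh.eigenvalues i) <
      s * ∑ i, Real.exp (hAh.eigenvalues i) + t * ∑ i, Real.exp (hBh.eigenvalues i) := by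
    rcases lt_or_eq_of_le htot with hlt | hE
    · exact hlt
    · exfalso
      -- equality throughout
      have h1 := mul_le_mul_of_nonneg_left hPA hs.le
      have h2 := mul_le_mul_of_nonneg_left hPB ht.le
      have hEA : ∑ i, Real.exp (a i) = ∑ i, Real.exp (hAh.eigenvalues i) := by
        refine mul_left_cancel₀ (ne_of_gt hs) ?_
        linarith
      have hEB : ∑ i, Real.exp (bb i) = ∑ i, Real.exp (hBh.eigenvalues i) := by
        refine mul_left_cancel₀ (ne_of_gt ht) ?_
        linarith
      have hmid : ∑ i, Real.exp (hHh.eigenvalues i)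
          = ∑ i, (s * Real.exp (a i) + t * Real.exp (bb i)) := by
        rw [Finset.sum_add_distrib, ← Finset.mul_sum, ← Finset.mul_sum, hEA, hEB, hE]
      have hterm := (Finset.sum_eq_sum_iff_of_le
        (fun i _ => hptle i)).mp hmid
      have habb : ∀ i, a i = bb i := by
        intro i
        by_contra hne
        have hstrict := strictConvexOn_exp.2 (Set.mem_univ (a i)) (Set.mem_univ (bb i))
          hne hs ht hst
        simp only [smul_eq_mul] at hstrict
        have := hterm i (Finset.mem_univ i)
        rw [hd i] at this
        linarith
      have hMA := peierls_eq hAh hV hEA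
      have hMB := peierls_eq hBh hV hEB
      have hfuneq : (fun i => ((((star V * A * V) i i).re : ℝ) : ℂ))
          = (fun i => ((((star V * B * V) i i).re : ℝ) : ℂ)) :=
        funext fun i => congrArg Complex.ofReal (habb i)
      have hABV : A * V = B * V := by
        rw [hMA, hMB, hfuneq]
      have hAB : A = B := by
        have h1 : A * (V * star V) = B * (V * star V) := by
          rw [← mul_assoc, ← mul_assoc, hABV]
        rwa [hV1, mul_one, mul_one] at h1
      have hdiff : ∑ ι, (x ι - y ι) • C ι = 0 := by
        have : ∑ ι, (x ι - y ι) • C ι = A - B := by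
          rw [hA_def, hB_def, ← Finset.sum_sub_distrib]
          exact Finset.sum_congr rfl fun ι _ => sub_smul _ _ _
        rw [this, hAB, sub_self]
      have hxy0 := Fintype.linearIndependent_iff.mp hind (fun ι => x ι - y ι) hdiff
      exact hxy (funext fun ι => sub_eq_zero.mp (hxy0 ι))
  -- put everything together
  have hlin : ∑ ι, (s • x + t • y) ι * b ι
      = s * ∑ ι, x ι * b ι + t * ∑ ι, y ι * b ι := by
    rw [Finset.mul_sum, Finset.mul_sum, ← Finset.sum_add_distrib]
    exact Finset.sum_congr rfl fun ι _ => by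
      simp only [Pi.add_apply, Pi.smul_apply, smul_eq_mul]; ring
  simp only [convPotential, smul_eq_mul]
  rw [hHe, hAe, hBe, hlin]
  linarith
end

section
/- Let p, q be positive integers and let C(1), …, C(q) be selfadjoint (Hermitian) p×p complex matrices that are linearly independent over ℝ and whose real linear span contains a positive definite matrix; let b(1), …, b(q) be real numbers. Then there exists a positive definite matrix X ∈ M_p(ℂ) with tr(C(ι)·X) = b(ι) for all ι = 1, …, q if and only if for every nonzero x ∈ ℝ^q such that Σ_{ι=1}^q x(ι)·C(ι) is positive semidefinite one has Σ_{ι=1}^q b(ι)·x(ι) > 0. -/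
open scoped Matrix ComplexOrder

namespace PDAuxiliary

variable {n : Type*} [Fintype n]

lemma herm_dot {A : Matrix n n ℂ} (hA : A.IsHermitian) (y : n → ℂ) :
    star (star y ⬝ᵥ A *ᵥ y) = star y ⬝ᵥ A *ᵥ y := by
  rw [← Matrix.star_dotProduct, Matrix.star_mulVec, ← Matrix.dotProduct_mulVec, hA.eq]

lemma herm_dot_re {A : Matrix n n ℂ} (hA : A.IsHermitian) (y : n → ℂ) :
    (star y ⬝ᵥ A *ᵥ y) = ((star y ⬝ᵥ A *ᵥ y).re : ℂ) :=
  (Complex.conj_eq_iff_re.mp (herm_dot hA y)).symm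

lemma trace_herm_real {A X : Matrix n n ℂ}
    (hA : A.IsHermitian) (hX : X.IsHermitian) :
    ((A * X).trace) = (((A * X).trace).re : ℂ) := by
  refine (Complex.conj_eq_iff_re.mp ?_).symm
  calc (starRingEnd ℂ) (A * X).trace = ((A * X)ᴴ).trace := by
        rw [Matrix.trace_conjTranspose]; rfl
    _ = (Xᴴ * Aᴴ).trace := by rw [Matrix.conjTranspose_mul]
    _ = (X * A).trace := by rw [hA.eq, hX.eq]
    _ = (A * X).trace := Matrix.trace_mul_comm X A

lemma trace_mul_vecMulVec (A : Matrix n n ℂ) (y : n → ℂ) :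
    (A * Matrix.vecMulVec y (star y)).trace = star y ⬝ᵥ A *ᵥ y := by
  simp only [Matrix.trace, Matrix.diag, Matrix.mul_apply, Matrix.vecMulVec, dotProduct,
    Matrix.mulVec, Matrix.of_apply, Pi.star_apply, RingHom.coe_coe, Finset.mul_sum,
    Finset.sum_mul]
  exact Finset.sum_congr rfl fun i _ => Finset.sum_congr rfl fun j _ => by ring

lemma posSemidef_vecMulVec (y : n → ℂ) :
    (Matrix.vecMulVec y (star y)).PosSemidef := by
  refine Matrix.posSemidef_iff_dotProduct_mulVec.mpr ⟨?_, ?_⟩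
  · ext i j; simp [Matrix.vecMulVec, mul_comm]
  · intro x
    have : star x ⬝ᵥ (Matrix.vecMulVec y (star y)) *ᵥ x = star (star y ⬝ᵥ x) * (star y ⬝ᵥ x) := by
      simp only [Matrix.vecMulVec, Matrix.mulVec, dotProduct, Matrix.of_apply,
        Pi.star_apply, Finset.mul_sum, Finset.sum_mul, star_sum, star_mul', star_star]
      rw [Finset.sum_comm]
      exact Finset.sum_congr rfl fun i _ => Finset.sum_congr rfl fun j _ => by ring
    rw [this]
    exact star_mul_self_nonneg _

omit [Fintype n] in
lemma real_smul_eq (r : ℝ) (M : Matrix n n ℂ) : r • M = (r : ℂ) • M := by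
  ext i j
  simp [Complex.real_smul]

lemma posDef_real_smul {r : ℝ} (hr : 0 < r) {M : Matrix n n ℂ} (hM : M.PosDef) :
    (r • M).PosDef := by
  rw [real_smul_eq]
  refine Matrix.posDef_iff_dotProduct_mulVec.mpr ⟨?_, fun x hx => ?_⟩
  · have := hM.1
    unfold Matrix.IsHermitian at *
    rw [Matrix.conjTranspose_smul, this]
    congr 1
    simp [Complex.ext_iff]
  · rw [Matrix.smul_mulVec, dotProduct_smul, smul_eq_mul]
    exact mul_pos (Complex.zero_lt_real.mpr hr) (hM.dotProduct_mulVec_pos hx)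

lemma posSemidef_real_smul {r : ℝ} (hr : 0 ≤ r) {M : Matrix n n ℂ} (hM : M.PosSemidef) :
    (r • M).PosSemidef := by
  rw [real_smul_eq]
  refine Matrix.posSemidef_iff_dotProduct_mulVec.mpr ⟨?_, fun x => ?_⟩
  · have := hM.1
    unfold Matrix.IsHermitian at *
    rw [Matrix.conjTranspose_smul, this]
    congr 1
    simp [Complex.ext_iff]
  · rw [Matrix.smul_mulVec, dotProduct_smul, smul_eq_mul]
    exact mul_nonneg (by exact_mod_cast Complex.real_le_real.mpr hr) (hM.dotProduct_mulVec_nonneg x)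

lemma trace_pos_of_ne_zero [DecidableEq n]
    {A X : Matrix n n ℂ} (hA : A.PosSemidef) (hA0 : A ≠ 0) (hX : X.PosDef) :
    0 < (A * X).trace := by
  obtain ⟨S, hS, hSS⟩ : ∃ S : Matrix n n ℂ, S.PosSemidef ∧ S * S = A := open scoped MatrixOrder in
    ⟨CFC.sqrt A, Matrix.nonneg_iff_posSemidef.mp (CFC.sqrt_nonneg A),
      CFC.sqrt_mul_sqrt_self A hA.nonneg⟩
  have hS0 : S ≠ 0 := fun h => hA0 (by rw [← hSS, h, mul_zero])
  have hsym : ∀ a b, (starRingEnd ℂ) (S b a) = S a b := fun a b =>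
    congrFun (congrFun hS.1 a) b
  have hcyc : (A * X).trace = (S * X * S).trace := by
    rw [Matrix.trace_mul_comm (S * X) S, ← Matrix.mul_assoc, ← hSS]
  rw [hcyc]
  have hdiag : ∀ i, (S * X * S) i i = star (fun j => S j i) ⬝ᵥ X *ᵥ (fun j => S j i) := by
    intro i
    simp only [Matrix.mul_apply, dotProduct, Matrix.mulVec, Pi.star_apply,
      Finset.sum_mul, Finset.mul_sum]
    rw [Finset.sum_comm]
    refine Finset.sum_congr rfl fun j _ => Finset.sum_congr rfl fun k _ => ?_
    simp only [← starRingEnd_apply, hsym]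
    ring
  obtain ⟨j₀, i₀, hji⟩ : ∃ j i, S j i ≠ 0 := by
    by_contra h
    push_neg at h
    exact hS0 (by ext j i; exact h j i)
  have hcol : (fun j => S j i₀) ≠ 0 := fun h => hji (congrFun h j₀)
  rw [Matrix.trace]
  refine Finset.sum_pos' (fun i _ => ?_) ⟨i₀, Finset.mem_univ _, ?_⟩
  · show 0 ≤ (S * X * S).diag i
    rw [Matrix.diag, hdiag i]
    by_cases hc : (fun j => S j i) = 0
    · rw [hc]; simp
    · exact le_of_lt (hX.dotProduct_mulVec_pos hc)
  · show 0 < (S * X * S).diag i₀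
    rw [Matrix.diag, hdiag i₀]
    exact hX.dotProduct_mulVec_pos hcol

variable {p : ℕ}

lemma quad_cont (X : Matrix (Fin p) (Fin p) ℂ) :
    Continuous fun x : Fin p → ℂ => (star x ⬝ᵥ X *ᵥ x).re := by
  have : (fun x : Fin p → ℂ => star x ⬝ᵥ X *ᵥ x)
      = fun x => ∑ i, star (x i) * ∑ j, X i j * x j := rfl
  refine Complex.continuous_re.comp ?_
  rw [this]
  refine continuous_finset_sum _ fun i _ => Continuous.mul ?_ ?_
  · exact Complex.continuous_conj.comp (continuous_apply i)
  · exact continuous_finset_sum _ fun j _ => continuous_const.mul (continuous_apply j)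

lemma quad_bound (E : Matrix (Fin p) (Fin p) ℂ) (x : Fin p → ℂ) :
    |(star x ⬝ᵥ E *ᵥ x).re| ≤ (∑ i, ∑ j, ‖E i j‖) * ‖x‖ ^ 2 := by
  have h1 : |(star x ⬝ᵥ E *ᵥ x).re| ≤ ‖star x ⬝ᵥ E *ᵥ x‖ := Complex.abs_re_le_norm _
  refine h1.trans ?_
  have : star x ⬝ᵥ E *ᵥ x = ∑ i, ∑ j, star (x i) * E i j * x j := by
    simp only [dotProduct, Matrix.mulVec, Pi.star_apply, Finset.mul_sum]
    exact Finset.sum_congr rfl fun i _ => Finset.sum_congr rfl fun j _ => by ring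
  rw [this]
  calc ‖∑ i, ∑ j, star (x i) * E i j * x j‖
      ≤ ∑ i, ∑ j, ‖star (x i) * E i j * x j‖ := by
        refine (Finset.sum_le_sum fun i _ => ?_).trans' (norm_sum_le _ _)
        exact norm_sum_le _ _
    _ ≤ ∑ i, ∑ j, ‖E i j‖ * ‖x‖ ^ 2 := by
        refine Finset.sum_le_sum fun i _ => Finset.sum_le_sum fun j _ => ?_
        rw [norm_mul, norm_mul]
        have hxi : ‖star (x i)‖ ≤ ‖x‖ := by
          rw [show star (x i) = (starRingEnd ℂ) (x i) from rfl, Complex.norm_conj]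
          exact norm_le_pi_norm x i
        have hxj : ‖x j‖ ≤ ‖x‖ := norm_le_pi_norm x j
        calc ‖star (x i)‖ * ‖E i j‖ * ‖x j‖
            ≤ ‖x‖ * ‖E i j‖ * ‖x‖ := by gcongr
          _ = ‖E i j‖ * ‖x‖ ^ 2 := by ring
    _ = (∑ i, ∑ j, ‖E i j‖) * ‖x‖ ^ 2 := by
        rw [Finset.sum_mul]
        exact Finset.sum_congr rfl fun i _ => by rw [Finset.sum_mul]

lemma quad_smul (X : Matrix (Fin p) (Fin p) ℂ) (c : ℝ) (x : Fin p → ℂ) :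
    (star (c • x) ⬝ᵥ X *ᵥ (c • x)).re = c ^ 2 * (star x ⬝ᵥ X *ᵥ x).re := by
  have hsm : (c • x) = (c : ℂ) • x := by
    ext i; simp [Complex.real_smul]
  rw [hsm, star_smul, Matrix.mulVec_smul, smul_dotProduct, dotProduct_smul]
  simp only [smul_eq_mul, star_trivial, Complex.star_def, Complex.conj_ofReal]
  rw [← mul_assoc]
  norm_cast
  rw [Complex.re_ofReal_mul]
  ring

lemma posdef_lower (hp : 0 < p) {X : Matrix (Fin p) (Fin p) ℂ} (hX : X.PosDef) :
    ∃ m > 0, ∀ x : Fin p → ℂ, (star x ⬝ᵥ X *ᵥ x).re ≥ m * ‖x‖ ^ 2 := by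
  have hsph : IsCompact (Metric.sphere (0 : Fin p → ℂ) 1) := isCompact_sphere _ _
  have hne : (Metric.sphere (0 : Fin p → ℂ) 1).Nonempty := by
    refine ⟨fun _ => 1, ?_⟩
    simp only [Metric.mem_sphere, dist_zero_right]
    haveI : Nonempty (Fin p) := ⟨⟨0, hp⟩⟩
    rw [pi_norm_const (1 : ℂ)]
    simp
  obtain ⟨u, hu, hmin⟩ := hsph.exists_isMinOn hne (quad_cont X).continuousOn
  have hu1 : ‖u‖ = 1 := by simpa [dist_zero_right] using hu
  have hu0 : u ≠ 0 := fun h => by simp [h] at hu1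
  set m := (star u ⬝ᵥ X *ᵥ u).re with hm
  have hmpos : 0 < m := hX.re_dotProduct_pos hu0
  refine ⟨m, hmpos, fun x => ?_⟩
  by_cases hx : x = 0
  · simp [hx]
  · have hnx : (0:ℝ) < ‖x‖ := norm_pos_iff.mpr hx
    set v : Fin p → ℂ := ‖x‖⁻¹ • x with hv
    have hv1 : ‖v‖ = 1 := by
      rw [hv, norm_smul]
      simp [abs_of_pos (inv_pos.mpr hnx), inv_mul_cancel₀ hnx.ne']
    have hvmem : v ∈ Metric.sphere (0 : Fin p → ℂ) 1 := by
      simpa [dist_zero_right] using hv1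
    have hvm : m ≤ (star v ⬝ᵥ X *ᵥ v).re := hmin hvmem
    have hq : (star v ⬝ᵥ X *ᵥ v).re = (‖x‖⁻¹) ^ 2 * (star x ⬝ᵥ X *ᵥ x).re := quad_smul X _ x
    rw [hq] at hvm
    have := mul_le_mul_of_nonneg_left hvm (le_of_lt (pow_pos hnx 2) : (0:ℝ) ≤ ‖x‖ ^ 2)
    calc m * ‖x‖ ^ 2 = ‖x‖ ^ 2 * m := by ring
      _ ≤ ‖x‖ ^ 2 * ((‖x‖⁻¹) ^ 2 * (star x ⬝ᵥ X *ᵥ x).re) := this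
      _ = (star x ⬝ᵥ X *ᵥ x).re := by field_simp

lemma posdef_perturb {X E : Matrix (Fin p) (Fin p) ℂ} (hX : X.PosDef) (hE : E.IsHermitian)
    {m : ℝ} (hlow : ∀ x, (star x ⬝ᵥ X *ᵥ x).re ≥ m * ‖x‖ ^ 2)
    (hsmall : (∑ i, ∑ j, ‖E i j‖) < m) : (X + E).PosDef := by
  refine Matrix.posDef_iff_dotProduct_mulVec.mpr ⟨hX.1.add hE, fun x hx => ?_⟩
  have him : star (star x ⬝ᵥ (X + E) *ᵥ x) = star x ⬝ᵥ (X + E) *ᵥ x := herm_dot (hX.1.add hE) x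
  have hsplit : star x ⬝ᵥ (X + E) *ᵥ x = star x ⬝ᵥ X *ᵥ x + star x ⬝ᵥ E *ᵥ x := by
    rw [Matrix.add_mulVec, dotProduct_add]
  have hnx : (0:ℝ) < ‖x‖ := norm_pos_iff.mpr hx
  have hre : 0 < (star x ⬝ᵥ (X + E) *ᵥ x).re := by
    rw [hsplit, Complex.add_re]
    have h1 := hlow x
    have h2 := (abs_le.mp (quad_bound E x)).1
    have h3 : (∑ i, ∑ j, ‖E i j‖) * ‖x‖ ^ 2 < m * ‖x‖ ^ 2 :=
      mul_lt_mul_of_pos_right hsmall (pow_pos hnx 2)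
    linarith
  rw [Complex.lt_def]
  constructor
  · simpa using hre
  · simp only [Complex.zero_im]
    exact (Complex.conj_eq_iff_im.mp him).symm

end PDAuxiliary

open PDAuxiliary

theorem pd_solution_iff_pos_functional {p q : ℕ} (hp : 0 < p) (hq : 0 < q)
    (C : Fin q → Matrix (Fin p) (Fin p) ℂ) (hC : ∀ ι, (C ι).IsHermitian)
    (hind : LinearIndependent ℝ C)
    (hspan : ∃ D : Matrix (Fin p) (Fin p) ℂ,
      D ∈ Submodule.span ℝ (Set.range C) ∧ D.PosDef)
    (b : Fin q → ℝ) :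
    (∃ X : Matrix (Fin p) (Fin p) ℂ, X.PosDef ∧
        ∀ ι, Matrix.trace (C ι * X) = (b ι : ℂ)) ↔
      ∀ x : Fin q → ℝ, x ≠ 0 → (∑ ι, x ι • C ι).PosSemidef → 0 < ∑ ι, b ι * x ι := by
  classical
  set T : Matrix (Fin p) (Fin p) ℂ → (Fin q → ℝ) :=
    fun X ι => ((C ι * X).trace).re with hTdef
  have hherm_sum : ∀ x : Fin q → ℝ, (∑ κ, x κ • C κ).IsHermitian := by
    intro x
    show (∑ κ, x κ • C κ)ᴴ = _
    rw [Matrix.conjTranspose_sum]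
    exact Finset.sum_congr rfl fun κ _ => by
      rw [Matrix.conjTranspose_smul, star_trivial, (hC κ).eq]
  have hAX : ∀ (x : Fin q → ℝ) (X : Matrix (Fin p) (Fin p) ℂ),
      ((∑ κ, x κ • C κ) * X).trace = ∑ κ, (x κ : ℂ) * ((C κ) * X).trace := by
    intro x X
    rw [Matrix.sum_mul, Matrix.trace_sum]
    refine Finset.sum_congr rfl fun κ _ => ?_
    rw [Matrix.smul_mul, Matrix.trace_smul, Complex.real_smul]
  constructor
  · rintro ⟨X, hX, htr⟩ x hx hpsd
    have hA0 : (∑ κ, x κ • C κ) ≠ 0 := by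
      intro h
      exact hx (funext fun κ => Fintype.linearIndependent_iff.mp hind x h κ)
    have hpos := trace_pos_of_ne_zero hpsd hA0 hX
    have heq : ((∑ κ, x κ • C κ) * X).trace = ((∑ κ, b κ * x κ : ℝ) : ℂ) := by
      rw [hAX]
      push_cast
      refine Finset.sum_congr rfl fun κ _ => ?_
      rw [htr κ]; ring
    rw [heq] at hpos
    exact Complex.zero_lt_real.mp hpos
  · intro hsep
    by_contra hno
    push_neg at hno
    -- linearity facts about T
    have hTadd : ∀ X Y, T (X + Y) = T X + T Y := by
      intro X Y
      funext ι
      show ((C ι * (X + Y)).trace).re = ((C ι * X).trace).re + ((C ι * Y).trace).re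
      rw [Matrix.mul_add, Matrix.trace_add, Complex.add_re]
    have hTsm : ∀ (r : ℝ) X, T (r • X) = r • T X := by
      intro r X
      funext ι
      show ((C ι * (r • X)).trace).re = r * ((C ι * X).trace).re
      rw [Matrix.mul_smul, Matrix.trace_smul, Complex.real_smul, Complex.re_ofReal_mul]
    -- the Gram matrix
    set G : Matrix (Fin q) (Fin q) ℝ := Matrix.of (fun ι κ => ((C ι * C κ).trace).re) with hGdef
    have hTC : ∀ w : Fin q → ℝ, T (∑ κ, w κ • C κ) = G *ᵥ w := by
      intro w
      funext ι
      show ((C ι * ∑ κ, w κ • C κ).trace).re = _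
      rw [Finset.mul_sum, Matrix.trace_sum, Complex.re_sum]
      simp only [Matrix.mul_smul, Matrix.trace_smul, Complex.real_smul, Complex.re_ofReal_mul]
      show ∑ κ, w κ * ((C ι * C κ).trace).re = ∑ κ, ((C ι * C κ).trace).re * w κ
      exact Finset.sum_congr rfl fun κ _ => mul_comm _ _
    have hGdet : G.det ≠ 0 := by
      intro hdet
      obtain ⟨v, hv0, hGv⟩ := (Matrix.exists_mulVec_eq_zero_iff).mpr hdet
      set A := ∑ κ, v κ • C κ with hAdef
      have hAherm : A.IsHermitian := hherm_sum v
      have htrA : ((A * A).trace).re = 0 := by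
        have h1 : ((A * A).trace) = ∑ κ, (v κ : ℂ) * ((C κ) * A).trace := hAX v A
        have h2 : ((A * A).trace).re = ∑ κ, v κ * (T A κ) := by
          rw [h1, Complex.re_sum]
          exact Finset.sum_congr rfl fun κ _ => Complex.re_ofReal_mul _ _
        rw [h2]
        have h3 : T A = G *ᵥ v := hTC v
        rw [h3, hGv]
        simp
      have hAA : ((A * A).trace).re = ∑ i, ∑ j, Complex.normSq (A i j) := by
        have h4 : (A * A).trace = ∑ i, ∑ j, A i j * A j i := by
          simp [Matrix.trace, Matrix.diag, Matrix.mul_apply]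
        rw [h4, Complex.re_sum]
        refine Finset.sum_congr rfl fun i _ => ?_
        rw [Complex.re_sum]
        refine Finset.sum_congr rfl fun j _ => ?_
        have haji : A j i = (starRingEnd ℂ) (A i j) :=
          (congrFun (congrFun hAherm.eq j) i).symm
        rw [haji, Complex.mul_conj]
        simp
      have hA0 : A = 0 := by
        rw [htrA] at hAA
        have hz : ∀ i ∈ (Finset.univ : Finset (Fin p)),
            ∑ j, Complex.normSq (A i j) = 0 := by
          intro i _
          refine (Finset.sum_eq_zero_iff_of_nonneg ?_).mp hAA.symm i (Finset.mem_univ i)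
          exact fun i _ => Finset.sum_nonneg fun j _ => Complex.normSq_nonneg _
        ext i j
        have := (Finset.sum_eq_zero_iff_of_nonneg
          (fun j _ => Complex.normSq_nonneg (A i j))).mp (hz i (Finset.mem_univ i)) j
          (Finset.mem_univ j)
        simpa [Complex.normSq_eq_zero] using this
      exact hv0 (funext fun κ => Fintype.linearIndependent_iff.mp hind v hA0 κ)
    have hGunit : IsUnit G.det := hGdet.isUnit
    have hGG : G * G⁻¹ = 1 := Matrix.mul_nonsing_inv G hGunit
    -- the set S
    set S : Set (Fin q → ℝ) := T '' {X | X.PosDef} with hSdef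
    have hone : (1 : Matrix (Fin p) (Fin p) ℂ).PosDef := Matrix.PosDef.one
    have hconv : Convex ℝ S := by
      rintro s₁ ⟨X₁, hX₁, rfl⟩ s₂ ⟨X₂, hX₂, rfl⟩ a c ha hc hac
      have hXpd : (a • X₁ + c • X₂).PosDef := by
        rcases eq_or_lt_of_le ha with h | h
        · have hc1 : c = 1 := by linarith
          rw [← h, hc1]
          simpa using hX₂
        · exact (posDef_real_smul h hX₁).add_posSemidef
            (posSemidef_real_smul hc hX₂.posSemidef)
      exact ⟨a • X₁ + c • X₂, hXpd, by rw [hTadd, hTsm, hTsm]⟩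
    have hopen : IsOpen S := by
      rw [Metric.isOpen_iff]
      rintro s ⟨X₀, hX₀, rfl⟩
      obtain ⟨m, hm, hlow⟩ := posdef_lower hp hX₀
      set K : ℝ := (∑ κ, (∑ κ', |G⁻¹ κ κ'|) * (∑ i, ∑ j, ‖C κ i j‖)) + 1 with hKdef
      have hK1 : (∑ κ, (∑ κ', |G⁻¹ κ κ'|) * (∑ i, ∑ j, ‖C κ i j‖)) + 1 = K := rfl
      have hKge : (∑ κ, (∑ κ', |G⁻¹ κ κ'|) * (∑ i, ∑ j, ‖C κ i j‖)) ≤ K := by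
        rw [← hK1]; linarith
      have hKpos : 0 < K := by
        rw [← hK1]
        have : 0 ≤ ∑ κ, (∑ κ', |G⁻¹ κ κ'|) * (∑ i, ∑ j, ‖C κ i j‖) :=
          Finset.sum_nonneg fun κ _ => mul_nonneg
            (Finset.sum_nonneg fun κ' _ => abs_nonneg _)
            (Finset.sum_nonneg fun i _ => Finset.sum_nonneg fun j _ => norm_nonneg _)
        linarith
      refine ⟨m / K, div_pos hm hKpos, ?_⟩
      rintro y hy
      rw [Metric.mem_ball, dist_eq_norm] at hy
      set z : Fin q → ℝ := y - T X₀ with hzdef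
      have hzn : ‖z‖ < m / K := hy
      set w : Fin q → ℝ := G⁻¹ *ᵥ z with hwdef
      set E : Matrix (Fin p) (Fin p) ℂ := ∑ κ, w κ • C κ with hEdef
      have hEherm := hherm_sum w
      -- bound on the coefficients
      have hwb : ∀ κ, |w κ| ≤ (∑ κ', |G⁻¹ κ κ'|) * ‖z‖ := by
        intro κ
        have : w κ = ∑ κ', G⁻¹ κ κ' * z κ' := rfl
        rw [this, Finset.sum_mul]
        refine (Finset.abs_sum_le_sum_abs _ _).trans (Finset.sum_le_sum fun κ' _ => ?_)
        rw [abs_mul]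
        exact mul_le_mul_of_nonneg_left (norm_le_pi_norm z κ') (abs_nonneg _)
      have hEbound : (∑ i, ∑ j, ‖E i j‖) < m := by
        have hstep : (∑ i, ∑ j, ‖E i j‖)
            ≤ ∑ κ, |w κ| * (∑ i, ∑ j, ‖C κ i j‖) := by
          have hEij : ∀ i j, ‖E i j‖ ≤ ∑ κ, |w κ| * ‖C κ i j‖ := by
            intro i j
            have : E i j = ∑ κ, (w κ : ℂ) * (C κ i j) := by
              rw [hEdef]
              simp [Matrix.sum_apply, Matrix.smul_apply, Complex.real_smul]
            rw [this]
            refine (norm_sum_le _ _).trans (Finset.sum_le_sum fun κ _ => ?_)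
            rw [norm_mul, Complex.norm_real, Real.norm_eq_abs]
          calc (∑ i, ∑ j, ‖E i j‖)
              ≤ ∑ i, ∑ j, ∑ κ, |w κ| * ‖C κ i j‖ :=
                Finset.sum_le_sum fun i _ => Finset.sum_le_sum fun j _ => hEij i j
            _ = ∑ κ, ∑ i, ∑ j, |w κ| * ‖C κ i j‖ :=
                (Finset.sum_congr rfl fun i _ => Finset.sum_comm).trans Finset.sum_comm
            _ = ∑ κ, |w κ| * (∑ i, ∑ j, ‖C κ i j‖) := by
                refine Finset.sum_congr rfl fun κ _ => ?_
                rw [Finset.mul_sum]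
                exact Finset.sum_congr rfl fun i _ => (Finset.mul_sum _ _ _).symm
        have hstep2 : ∑ κ, |w κ| * (∑ i, ∑ j, ‖C κ i j‖)
            ≤ ‖z‖ * ∑ κ, (∑ κ', |G⁻¹ κ κ'|) * (∑ i, ∑ j, ‖C κ i j‖) := by
          rw [Finset.mul_sum]
          refine Finset.sum_le_sum fun κ _ => ?_
          have hnn : (0:ℝ) ≤ ∑ i, ∑ j, ‖C κ i j‖ :=
            Finset.sum_nonneg fun i _ => Finset.sum_nonneg fun j _ => norm_nonneg _
          calc |w κ| * (∑ i, ∑ j, ‖C κ i j‖)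
              ≤ ((∑ κ', |G⁻¹ κ κ'|) * ‖z‖) * (∑ i, ∑ j, ‖C κ i j‖) :=
                mul_le_mul_of_nonneg_right (hwb κ) hnn
            _ = ‖z‖ * ((∑ κ', |G⁻¹ κ κ'|) * (∑ i, ∑ j, ‖C κ i j‖)) := by ring
        have hstep3 : ‖z‖ * ∑ κ, (∑ κ', |G⁻¹ κ κ'|) * (∑ i, ∑ j, ‖C κ i j‖)
            ≤ ‖z‖ * K := mul_le_mul_of_nonneg_left hKge (norm_nonneg _)
        have hstep4 : ‖z‖ * K < (m / K) * K := mul_lt_mul_of_pos_right hzn hKpos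
        have hstep5 : (m / K) * K = m := div_mul_cancel₀ m hKpos.ne'
        linarith
      have hXE : (X₀ + E).PosDef := posdef_perturb hX₀ hEherm hlow hEbound
      refine ⟨X₀ + E, hXE, ?_⟩
      rw [hTadd, hTC w, hwdef, Matrix.mulVec_mulVec, hGG, Matrix.one_mulVec]
      rw [hzdef]
      funext ι
      simp
    have hbS : b ∉ S := by
      rintro ⟨X, hX, hbX⟩
      obtain ⟨ι, hι⟩ := hno X hX
      apply hι
      have h1 : ((C ι * X).trace).re = b ι := congrFun hbX ι
      rw [trace_herm_real (hC ι) hX.1, h1]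
    obtain ⟨f, hf⟩ := geometric_hahn_banach_open_point hconv hopen hbS
    set x : Fin q → ℝ := fun ι => f (Pi.single ι 1) with hxdef
    have frepr : ∀ y : Fin q → ℝ, f y = ∑ ι, y ι * x ι := by
      intro y
      have hy : y = ∑ ι, y ι • (Pi.single ι 1 : Fin q → ℝ) := by
        funext j
        simp [Finset.sum_apply, Pi.single_apply]
      conv_lhs => rw [hy]
      rw [map_sum]
      exact Finset.sum_congr rfl fun ι _ => by rw [map_smul]; simp [hxdef]
    have hfsm : ∀ (t : ℝ) (X : Matrix (Fin p) (Fin p) ℂ), f (T (t • X)) = t * f (T X) := by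
      intro t X
      rw [hTsm, map_smul, smul_eq_mul]
    have hfb0 : 0 ≤ f b := by
      by_contra h
      push_neg at h
      have h1 : ∀ t : ℝ, 0 < t → t * f (T (1 : Matrix (Fin p) (Fin p) ℂ)) < f b := by
        intro t ht
        have h2 := hf (T (t • (1 : Matrix (Fin p) (Fin p) ℂ)))
          ⟨t • (1 : Matrix (Fin p) (Fin p) ℂ), posDef_real_smul ht hone, rfl⟩
        rwa [hfsm] at h2
      set c : ℝ := f (T (1 : Matrix (Fin p) (Fin p) ℂ)) with hcdef
      have hc : c < 0 := by have := h1 1 one_pos; linarith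
      have h2 := h1 (f b / (2 * c)) (div_pos_of_neg_of_neg h (by linarith))
      have heq : f b / (2 * c) * c = f b / 2 := by
        rw [div_mul_eq_mul_div, mul_comm (2:ℝ) c, ← div_div, mul_div_assoc,
          div_self hc.ne, mul_one]
      rw [heq] at h2
      linarith
    have hfX : ∀ X : Matrix (Fin p) (Fin p) ℂ, X.PosDef → f (T X) ≤ 0 := by
      intro X hX
      by_contra h
      push_neg at h
      have h1 : ∀ t : ℝ, 0 < t → t * f (T X) < f b := by
        intro t ht
        have h2 := hf (T (t • X)) ⟨t • X, posDef_real_smul ht hX, rfl⟩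
        rwa [hfsm] at h2
      have h2 := h1 ((f b + 1) / f (T X)) (div_pos (by linarith) h)
      rw [div_mul_cancel₀ _ h.ne'] at h2
      linarith
    -- f ∘ T in terms of the matrix A = ∑ x κ • C κ
    have hfT : ∀ X : Matrix (Fin p) (Fin p) ℂ,
        f (T X) = (((∑ κ, x κ • C κ) * X).trace).re := by
      intro X
      rw [frepr, hAX, Complex.re_sum]
      exact Finset.sum_congr rfl fun κ _ => by rw [Complex.re_ofReal_mul]; ring
    have hxne : x ≠ 0 := by
      intro h
      have hz : f (T (1 : Matrix (Fin p) (Fin p) ℂ)) < f b :=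
        hf _ ⟨(1 : Matrix (Fin p) (Fin p) ℂ), hone, rfl⟩
      rw [frepr, frepr, h] at hz
      simp at hz
    set A : Matrix (Fin p) (Fin p) ℂ := ∑ κ, x κ • C κ with hAdef
    have hAherm := hherm_sum x
    have hquadle : ∀ y : Fin p → ℂ, (star y ⬝ᵥ A *ᵥ y).re ≤ 0 := by
      intro y
      have key : ∀ ε : ℝ, 0 < ε →
          (star y ⬝ᵥ A *ᵥ y).re + ε * (A.trace).re ≤ 0 := by
        intro ε hε
        have hXε : (Matrix.vecMulVec y (star y) + ε • (1 : Matrix (Fin p) (Fin p) ℂ)).PosDef :=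
          Matrix.PosDef.posSemidef_add (posSemidef_vecMulVec y) (posDef_real_smul hε hone)
        have h1 := hfX _ hXε
        rw [hfT] at h1
        have h2 : (A * (Matrix.vecMulVec y (star y) + ε • (1 : Matrix (Fin p) (Fin p) ℂ))).trace
            = star y ⬝ᵥ A *ᵥ y + (ε : ℂ) * A.trace := by
          rw [Matrix.mul_add, Matrix.trace_add, trace_mul_vecMulVec]
          congr 1
          rw [Matrix.mul_smul, mul_one, Matrix.trace_smul, Complex.real_smul]
        rw [h2, Complex.add_re, Complex.re_ofReal_mul] at h1
        exact h1
      by_contra h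
      push_neg at h
      set r := (star y ⬝ᵥ A *ᵥ y).re
      set tA := (A.trace).re
      rcases le_or_gt 0 tA with h1 | h1
      · have := key 1 one_pos
        linarith
      · have hpos : 0 < r / (-2 * tA) := div_pos h (by linarith)
        have := key (r / (-2 * tA)) hpos
        have htA : tA ≠ 0 := ne_of_lt h1
        have heq : r / (-2 * tA) * tA = -(r / 2) := by
          rw [div_mul_eq_mul_div, mul_comm r tA, mul_comm (-2:ℝ) tA,
            mul_div_mul_left _ _ htA, div_neg]
        rw [heq] at this
        linarith
    have hpsd : (∑ κ, (-x) κ • C κ).PosSemidef := by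
      have hsum : (∑ κ, (-x) κ • C κ) = -A := by
        rw [hAdef, ← Finset.sum_neg_distrib]
        exact Finset.sum_congr rfl fun κ _ => by simp [neg_smul]
      rw [hsum]
      refine Matrix.posSemidef_iff_dotProduct_mulVec.mpr ⟨?_, fun y => ?_⟩
      · show (-A)ᴴ = -A
        rw [Matrix.conjTranspose_neg, hAherm.eq]
      · rw [Matrix.neg_mulVec, dotProduct_neg]
        rw [herm_dot_re hAherm y]
        have := hquadle y
        rw [← Complex.ofReal_neg]
        exact_mod_cast Complex.real_le_real.mpr (by linarith)
    have hfinal := hsep (-x) (neg_ne_zero.mpr hxne) hpsd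
    have hsum : ∑ ι, b ι * (-x) ι = -(f b) := by
      rw [frepr b, ← Finset.sum_neg_distrib]
      exact Finset.sum_congr rfl fun ι _ => by simp [mul_comm]
    rw [hsum] at hfinal
    linarith
end

section
/- Let M be a finite-dimensional real vector space, let C ⊆ M be a closed convex cone with C ∩ (−C) = {0}, let S ⊆ M be a linear subspace, and let l : S → ℝ be a linear functional such that l(s) > 0 for every nonzero s ∈ S ∩ C. Then there exists a linear functional L : M → ℝ extending l such that L(m) > 0 for every nonzero m ∈ C. -/
open Filter Topology Module Metric

private lemma cone_pinch {M : Type*} [NormedAddCommGroup M] [NormedSpace ℝ M]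
    [FiniteDimensional ℝ M] (C : Set M) (hclosed : IsClosed C)
    (hsmul : ∀ x ∈ C, ∀ r : ℝ, 0 ≤ r → r • x ∈ C)
    (hpointed : C ∩ (-C) = {0}) :
    ∃ K : ℝ, 0 < K ∧ ∀ x ∈ C, ∀ y ∈ C, ‖x‖ ≤ K * ‖x + y‖ := by
  by_contra hcon
  push_neg at hcon
  have h : ∀ n : ℕ, ∃ x ∈ C, ∃ y ∈ C, ((n : ℝ) + 1) * ‖x + y‖ < ‖x‖ := fun n =>
    hcon ((n : ℝ) + 1) (by positivity)
  choose x hx y hy hxy using h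
  have hxpos : ∀ n, (0:ℝ) < ‖x n‖ := by
    intro n
    rcases (norm_nonneg (x n)).lt_or_eq with h | h
    · exact h
    · exfalso; have := hxy n; nlinarith [norm_nonneg (x n + y n)]
  set u : ℕ → M := fun n => ‖x n‖⁻¹ • x n with hu
  set w : ℕ → M := fun n => ‖x n‖⁻¹ • y n with hw
  have huC : ∀ n, u n ∈ C := fun n => hsmul _ (hx n) _ (by positivity)
  have hwC : ∀ n, w n ∈ C := fun n => hsmul _ (hy n) _ (by positivity)
  have hus : ∀ n, u n ∈ sphere (0:M) 1 := by
    intro n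
    rw [mem_sphere_zero_iff_norm, hu, norm_smul, norm_inv, norm_norm,
      inv_mul_cancel₀ (hxpos n).ne']
  have hsum : Tendsto (fun n => u n + w n) atTop (𝓝 0) := by
    apply squeeze_zero_norm (a := fun n : ℕ => 1 / ((n:ℝ)+1))
    · intro n
      have h1 : ‖u n + w n‖ = ‖x n + y n‖ / ‖x n‖ := by
        rw [hu, hw, ← smul_add, norm_smul, norm_inv, norm_norm, inv_mul_eq_div]
      rw [h1, div_le_div_iff₀ (hxpos n) (by positivity)]
      have := hxy n
      nlinarith [norm_nonneg (x n + y n)]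
    · exact tendsto_one_div_add_atTop_nhds_zero_nat
  obtain ⟨p, hp, φ, hφ, hup⟩ := (isCompact_sphere (0:M) 1).tendsto_subseq hus
  have hpC : p ∈ C := hclosed.mem_of_tendsto hup (Eventually.of_forall fun n => huC _)
  have hwp : Tendsto (fun n => w (φ n)) atTop (𝓝 (-p)) := by
    have : (fun n => w (φ n)) = (fun n => (u (φ n) + w (φ n)) - u (φ n)) := by
      funext n; abel
    rw [this]
    have h2 : Tendsto (fun n => u (φ n) + w (φ n)) atTop (𝓝 0) :=
      hsum.comp hφ.tendsto_atTop
    simpa using h2.sub hup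
  have hnpC : -p ∈ C := hclosed.mem_of_tendsto hwp (Eventually.of_forall fun n => hwC _)
  have : p ∈ C ∩ (-C) := ⟨hpC, by simpa using hnpC⟩
  rw [hpointed] at this
  rw [mem_sphere_zero_iff_norm] at hp
  simp only [Set.mem_singleton_iff] at this
  rw [this] at hp
  simp at hp

private lemma cone_delta {M : Type*} [NormedAddCommGroup M] [NormedSpace ℝ M]
    [FiniteDimensional ℝ M] (C : Set M) (hclosed : IsClosed C)
    (hsmul : ∀ x ∈ C, ∀ r : ℝ, 0 ≤ r → r • x ∈ C)
    (D : Submodule ℝ M) (F : M →ₗ[ℝ] ℝ)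
    (hF : ∀ x ∈ D, x ∈ C → x ≠ 0 → 0 < F x) :
    ∃ δ : ℝ, 0 < δ ∧ ∀ x ∈ D, x ∈ C → δ * ‖x‖ ≤ F x := by
  have hDc : IsClosed (D : Set M) := Submodule.closed_of_finiteDimensional D
  set K : Set M := ((D : Set M) ∩ C) ∩ sphere (0:M) 1 with hK
  have hKc : IsCompact K :=
    ((isCompact_sphere (0:M) 1).inter_left (hDc.inter hclosed))
  have hFc : Continuous F := F.continuous_of_finiteDimensional
  have key : ∀ δ : ℝ, 0 < δ → (∀ z ∈ K, δ ≤ F z) → ∀ x ∈ D, x ∈ C → δ * ‖x‖ ≤ F x := by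
    intro δ hδ hb x hxD hxC
    rcases eq_or_ne x 0 with rfl | hx0
    · simp
    · have hxpos : (0:ℝ) < ‖x‖ := norm_pos_iff.2 hx0
      have hz : ‖x‖⁻¹ • x ∈ K := by
        refine ⟨⟨D.smul_mem _ hxD, hsmul _ hxC _ (by positivity)⟩, ?_⟩
        rw [mem_sphere_zero_iff_norm, norm_smul, norm_inv, norm_norm,
          inv_mul_cancel₀ hxpos.ne']
      have := hb _ hz
      rw [map_smul, smul_eq_mul] at this
      rw [mul_comm]
      calc ‖x‖ * δ ≤ ‖x‖ * (‖x‖⁻¹ * F x) := by nlinarith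
        _ = F x := by field_simp
  rcases Set.eq_empty_or_nonempty K with hKe | hKne
  · refine ⟨1, one_pos, key 1 one_pos ?_⟩
    intro z hz; rw [hKe] at hz; exact absurd hz (Set.notMem_empty z)
  · obtain ⟨z₀, hz₀K, hz₀min⟩ := hKc.exists_isMinOn hKne hFc.continuousOn
    have hz₀pos : 0 < F z₀ := by
      apply hF _ hz₀K.1.1 hz₀K.1.2
      intro h0
      have := hz₀K.2
      rw [mem_sphere_zero_iff_norm, h0] at this
      simp at this
    exact ⟨F z₀, hz₀pos, key _ hz₀pos fun z hz => hz₀min hz⟩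

private lemma cone_bdd {M : Type*} [NormedAddCommGroup M] [NormedSpace ℝ M]
    [FiniteDimensional ℝ M] (C : Set M) (hclosed : IsClosed C)
    (hsmul : ∀ x ∈ C, ∀ r : ℝ, 0 ≤ r → r • x ∈ C)
    (D : Submodule ℝ M) (F : M →ₗ[ℝ] ℝ)
    (hF : ∀ x ∈ D, x ∈ C → x ≠ 0 → 0 < F x) (v : M) :
    ∃ c : ℝ, ∀ x ∈ D, x + v ∈ C → c ≤ F x := by
  by_contra hcon
  push_neg at hcon
  have h : ∀ n : ℕ, ∃ x ∈ D, x + v ∈ C ∧ F x < -(n+1 : ℝ) := by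
    intro n
    obtain ⟨x, hxD, hxC, hxF⟩ := hcon (-(n+1:ℝ))
    exact ⟨x, hxD, hxC, hxF⟩
  choose x hxD hxC hxF using h
  set Fc := LinearMap.toContinuousLinearMap F with hFcdef
  have hbound : ∀ n : ℕ, (n:ℝ)+1 ≤ ‖Fc‖ * ‖x n‖ := by
    intro n
    have h1 : |F (x n)| ≤ ‖Fc‖ * ‖x n‖ := Fc.le_opNorm (x n)
    have h2 := hxF n
    rw [abs_le] at h1
    linarith [h1.1]
  have hFcpos : (0:ℝ) < ‖Fc‖ := by
    rcases (norm_nonneg Fc).lt_or_eq with h | h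
    · exact h
    · exfalso; have := hbound 0; rw [← h] at this; norm_num at this
  have hxpos : ∀ n, (0:ℝ) < ‖x n‖ := by
    intro n
    have := hbound n
    nlinarith [norm_nonneg (x n)]
  have hinv0 : Tendsto (fun n => ‖x n‖⁻¹) atTop (𝓝 0) := by
    apply squeeze_zero (fun n => by positivity)
      (g := fun n : ℕ => ‖Fc‖ / ((n:ℝ)+1))
    · intro n
      rw [inv_le_iff_one_le_mul₀ (hxpos n), div_mul_eq_mul_div, le_div_iff₀ (by positivity)]
      have := hbound n
      nlinarith
    · have h3 := tendsto_one_div_add_atTop_nhds_zero_nat.const_mul ‖Fc‖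
      rw [mul_zero] at h3
      refine h3.congr fun n => ?_
      rw [mul_one_div]
  set u : ℕ → M := fun n => ‖x n‖⁻¹ • x n with hu
  have hus : ∀ n, u n ∈ sphere (0:M) 1 := by
    intro n
    rw [mem_sphere_zero_iff_norm, hu, norm_smul, norm_inv, norm_norm,
      inv_mul_cancel₀ (hxpos n).ne']
  obtain ⟨p, hp, φ, hφ, hup⟩ := (isCompact_sphere (0:M) 1).tendsto_subseq hus
  have hDc : IsClosed (D : Set M) := Submodule.closed_of_finiteDimensional D
  have hpD : p ∈ D := hDc.mem_of_tendsto hup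
    (Eventually.of_forall fun n => D.smul_mem _ (hxD _))
  have hpC : p ∈ C := by
    have hmem : ∀ n, u n + ‖x n‖⁻¹ • v ∈ C := by
      intro n
      have := hsmul _ (hxC n) (‖x n‖⁻¹) (by positivity)
      rwa [smul_add] at this
    have htend : Tendsto (fun n => u (φ n) + ‖x (φ n)‖⁻¹ • v) atTop (𝓝 p) := by
      have h2 : Tendsto (fun n => ‖x (φ n)‖⁻¹ • v) atTop (𝓝 (0:M)) := by
        have h2' := (hinv0.comp hφ.tendsto_atTop).smul_const v
        rw [zero_smul] at h2'
        exact h2'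
      have h4 := hup.add h2
      rw [add_zero] at h4
      exact h4
    exact hclosed.mem_of_tendsto htend (Eventually.of_forall fun n => hmem _)
  have hpne : p ≠ 0 := by
    rw [mem_sphere_zero_iff_norm] at hp
    intro h0; rw [h0] at hp; simp at hp
  have hFp : F p ≤ 0 := by
    have hFc' : Continuous F := F.continuous_of_finiteDimensional
    have htend : Tendsto (fun n => F (u (φ n))) atTop (𝓝 (F p)) :=
      (hFc'.tendsto p).comp hup
    refine le_of_tendsto htend (Eventually.of_forall fun n => ?_)
    rw [hu]
    simp only [map_smul, smul_eq_mul]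
    have h5 := hxF (φ n)
    have hnn : (0:ℝ) ≤ (φ n : ℝ) := Nat.cast_nonneg _
    have h6 : ‖x (φ n)‖⁻¹ * F (x (φ n)) < 0 :=
      mul_neg_of_pos_of_neg (inv_pos.2 (hxpos _)) (by nlinarith)
    linarith
  exact absurd (hF p hpD hpC hpne) (by linarith)

private lemma cone_gap {M : Type*} [NormedAddCommGroup M] [NormedSpace ℝ M]
    [FiniteDimensional ℝ M] (C : Set M) (hclosed : IsClosed C)
    (hadd : ∀ x ∈ C, ∀ y ∈ C, x + y ∈ C)
    (hsmul : ∀ x ∈ C, ∀ r : ℝ, 0 ≤ r → r • x ∈ C)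
    (hpointed : C ∩ (-C) = {0})
    (D : Submodule ℝ M) (F : M →ₗ[ℝ] ℝ)
    (hF : ∀ x ∈ D, x ∈ C → x ≠ 0 → 0 < F x) (v : M) (hv : v ∉ D) :
    ∃ c : ℝ, (∀ x ∈ D, x + v ∈ C → -F x < c) ∧ (∀ x ∈ D, x - v ∈ C → c < F x) := by
  set A : Set ℝ := {r | ∃ x, x ∈ D ∧ x + v ∈ C ∧ r = -F x} with hA
  set B : Set ℝ := {r | ∃ x, x ∈ D ∧ x - v ∈ C ∧ r = F x} with hB
  -- pairwise strict inequality
  have hAB : ∀ a ∈ A, ∀ b ∈ B, a < b := by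
    rintro a ⟨x, hxD, hxC, rfl⟩ b ⟨y, hyD, hyC, rfl⟩
    have hsum : x + y ∈ C := by
      have := hadd _ hxC _ hyC
      have heq : x + v + (y - v) = x + y := by abel
      rwa [heq] at this
    have hne : x + y ≠ 0 := by
      intro h0
      have h1 : y - v = -(x + v) := by
        rw [show y = -x from by linear_combination (norm := module) h0]
        abel
      have : x + v ∈ C ∩ (-C) := ⟨hxC, by rw [Set.mem_neg, ← h1]; exact hyC⟩
      rw [hpointed, Set.mem_singleton_iff] at this
      apply hv
      have : v = -x := by linear_combination (norm := module) this
      rw [this]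
      exact D.neg_mem hxD
    have := hF _ (D.add_mem hxD hyD) hsum hne
    rw [map_add] at this
    linarith
  -- boundedness
  obtain ⟨cA, hcA⟩ := cone_bdd C hclosed hsmul D F hF v
  obtain ⟨cB, hcB⟩ := cone_bdd C hclosed hsmul D F hF (-v)
  have hAbdd : BddAbove A := by
    refine ⟨-cA, ?_⟩
    rintro a ⟨x, hxD, hxC, rfl⟩
    have := hcA x hxD hxC
    simp only [neg_le_neg_iff]
    linarith
  have hBbdd : BddBelow B := by
    refine ⟨cB, ?_⟩
    rintro b ⟨x, hxD, hxC, rfl⟩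
    exact hcB x hxD (by rwa [← sub_eq_add_neg])
  rcases Set.eq_empty_or_nonempty A with hAe | hAne
  · rcases Set.eq_empty_or_nonempty B with hBe | hBne
    · refine ⟨0, fun x hxD hxC => ?_, fun x hxD hxC => ?_⟩
      · have hm : -F x ∈ A := ⟨x, hxD, hxC, rfl⟩
        rw [hAe] at hm
        exact absurd hm (Set.notMem_empty _)
      · have hm : F x ∈ B := ⟨x, hxD, hxC, rfl⟩
        rw [hBe] at hm
        exact absurd hm (Set.notMem_empty _)
    · refine ⟨sInf B - 1, ?_, ?_⟩
      · intro x hxD hxC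
        have hm : -F x ∈ A := ⟨x, hxD, hxC, rfl⟩
        rw [hAe] at hm
        exact absurd hm (Set.notMem_empty _)
      · intro x hxD hxC
        have : sInf B ≤ F x := csInf_le hBbdd ⟨x, hxD, hxC, rfl⟩
        linarith
  · rcases Set.eq_empty_or_nonempty B with hBe | hBne
    · refine ⟨sSup A + 1, ?_, ?_⟩
      · intro x hxD hxC
        have : -F x ≤ sSup A := le_csSup hAbdd ⟨x, hxD, hxC, rfl⟩
        linarith
      · intro x hxD hxC
        have hm : F x ∈ B := ⟨x, hxD, hxC, rfl⟩
        rw [hBe] at hm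
        exact absurd hm (Set.notMem_empty _)
    · -- main case: need sSup A < sInf B
      have hle : sSup A ≤ sInf B :=
        csSup_le hAne fun a ha => le_csInf hBne fun b hb => (hAB a ha b hb).le
      have hlt : sSup A < sInf B := by
        rcases hle.lt_or_eq with h | heq
        · exact h
        · exfalso
          set c₀ := sSup A with hc₀
          obtain ⟨δ, hδpos, hδ⟩ := cone_delta C hclosed hsmul D F hF
          obtain ⟨K, hKpos, hK⟩ := cone_pinch C hclosed hsmul hpointed
          -- sequences
          have hseqA : ∀ n : ℕ, ∃ x, x ∈ D ∧ x + v ∈ C ∧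
              c₀ - 1/((n:ℝ)+1) < -F x ∧ -F x ≤ c₀ := by
            intro n
            obtain ⟨a, haA, halt⟩ := exists_lt_of_lt_csSup hAne
              (show c₀ - 1/((n:ℝ)+1) < c₀ by
                have : (0:ℝ) < 1/((n:ℝ)+1) := by positivity
                linarith)
            obtain ⟨x, hxD, hxC, rfl⟩ := haA
            exact ⟨x, hxD, hxC, halt, le_csSup hAbdd ⟨x, hxD, hxC, rfl⟩⟩
          have hseqB : ∀ n : ℕ, ∃ y, y ∈ D ∧ y - v ∈ C ∧
              F y < c₀ + 1/((n:ℝ)+1) ∧ c₀ ≤ F y := by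
            intro n
            obtain ⟨b, hbB, hblt⟩ := exists_lt_of_csInf_lt hBne
              (show sInf B < c₀ + 1/((n:ℝ)+1) by
                have : (0:ℝ) < 1/((n:ℝ)+1) := by positivity
                rw [← heq]
                linarith)
            obtain ⟨y, hyD, hyC, rfl⟩ := hbB
            refine ⟨y, hyD, hyC, hblt, ?_⟩
            rw [heq]
            exact csInf_le hBbdd ⟨y, hyD, hyC, rfl⟩
          choose xs hxD hxC hxlt hxle using hseqA
          choose ys hyD hyC hylt hyle using hseqB
          set w : ℕ → M := fun n => xs n + ys n with hw
          have hwC : ∀ n, w n ∈ C := by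
            intro n
            have := hadd _ (hxC n) _ (hyC n)
            have heq2 : xs n + v + (ys n - v) = w n := by rw [hw]; abel
            rwa [heq2] at this
          have hwD : ∀ n, w n ∈ D := fun n => D.add_mem (hxD n) (hyD n)
          have hwF : ∀ n, F (w n) ≤ 2/((n:ℝ)+1) := by
            intro n
            have h1 := hxlt n
            have h2 := hylt n
            rw [hw, map_add]
            have : F (xs n) < -c₀ + 1/((n:ℝ)+1) := by linarith
            have h4 : F (ys n) < c₀ + 1/((n:ℝ)+1) := h2
            have h5 : 1/((n:ℝ)+1) + 1/((n:ℝ)+1) = 2/((n:ℝ)+1) := by ring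
            linarith
          have hwnorm : ∀ n, ‖w n‖ ≤ δ⁻¹ * (2/((n:ℝ)+1)) := by
            intro n
            have h6 := hwF n
            calc ‖w n‖ ≤ F (w n) / δ := by
                  rw [le_div_iff₀ hδpos]; linarith [hδ _ (hwD n) (hwC n)]
              _ ≤ δ⁻¹ * (2/((n:ℝ)+1)) := by
                  rw [div_eq_inv_mul]
                  exact mul_le_mul_of_nonneg_left h6 (by positivity)
          have hw0 : Tendsto w atTop (𝓝 0) := by
            apply squeeze_zero_norm (a := fun n : ℕ => δ⁻¹ * (2/((n:ℝ)+1)))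
              hwnorm
            have h7 := tendsto_one_div_add_atTop_nhds_zero_nat.const_mul (2 * δ⁻¹)
            rw [mul_zero] at h7
            refine h7.congr fun n => ?_
            ring
          have hxv0 : Tendsto (fun n => xs n + v) atTop (𝓝 0) := by
            apply squeeze_zero_norm (a := fun n => K * ‖w n‖)
            · intro n
              have := hK _ (hxC n) _ (hyC n)
              have heq2 : xs n + v + (ys n - v) = w n := by rw [hw]; abel
              rwa [heq2] at this
            · have := (continuous_norm.tendsto (0:M)).comp hw0
              rw [Function.comp_def] at this
              simp only [norm_zero] at this
              have h8 := this.const_mul K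
              rwa [mul_zero] at h8
          have hxtend : Tendsto xs atTop (𝓝 (-v)) := by
            have := hxv0.sub_const v
            simp only [add_sub_cancel_right] at this
            simpa using this
          have hvD : -v ∈ D := (Submodule.closed_of_finiteDimensional D).mem_of_tendsto
            hxtend (Eventually.of_forall fun n => hxD n)
          exact hv (by simpa using D.neg_mem hvD)
      refine ⟨(sSup A + sInf B)/2, ?_, ?_⟩
      · intro x hxD hxC
        have : -F x ≤ sSup A := le_csSup hAbdd ⟨x, hxD, hxC, rfl⟩
        linarith
      · intro x hxD hxC
        have : sInf B ≤ F x := csInf_le hBbdd ⟨x, hxD, hxC, rfl⟩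
        linarith

private lemma cone_step {M : Type*} [NormedAddCommGroup M] [NormedSpace ℝ M]
    [FiniteDimensional ℝ M] (C : Set M) (hclosed : IsClosed C)
    (hadd : ∀ x ∈ C, ∀ y ∈ C, x + y ∈ C)
    (hsmul : ∀ x ∈ C, ∀ r : ℝ, 0 ≤ r → r • x ∈ C)
    (hpointed : C ∩ (-C) = {0})
    (f : M →ₗ.[ℝ] ℝ) (hf : ∀ x : f.domain, (x : M) ∈ C → (x : M) ≠ 0 → 0 < f x)
    (v : M) (hv : v ∉ f.domain) :
    ∃ g : M →ₗ.[ℝ] ℝ, f ≤ g ∧ g.domain = f.domain ⊔ (ℝ ∙ v) ∧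
      ∀ x : g.domain, (x : M) ∈ C → (x : M) ≠ 0 → 0 < g x := by
  obtain ⟨F, hFext⟩ := LinearMap.exists_extend f.toFun
  have hFval : ∀ x : f.domain, F (x : M) = f x := fun x =>
    LinearMap.congr_fun hFext x
  have hFpos : ∀ x ∈ f.domain, x ∈ C → x ≠ 0 → 0 < F x := by
    intro x hxD hxC hx0
    rw [show F x = f ⟨x, hxD⟩ from hFval ⟨x, hxD⟩]
    exact hf ⟨x, hxD⟩ hxC hx0
  obtain ⟨c, hc1, hc2⟩ := cone_gap C hclosed hadd hsmul hpointed f.domain F hFpos v hv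
  refine ⟨f.supSpanSingleton v c hv, ?_, LinearPMap.domain_supSpanSingleton f v c hv, ?_⟩
  · exact LinearPMap.left_le_sup _ _ _
  · rintro ⟨z, hz⟩ hzC hz0
    rw [LinearPMap.domain_supSpanSingleton] at hz
    obtain ⟨x, hxD, e, he, rfl⟩ := Submodule.mem_sup.1 hz
    obtain ⟨t, rfl⟩ := Submodule.mem_span_singleton.1 he
    have happ : f.supSpanSingleton v c hv ⟨x + t • v, hz⟩ = f ⟨x, hxD⟩ + t * c := by
      have := LinearPMap.supSpanSingleton_apply_mk f v c hv x hxD t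
      convert this using 2
      rfl
    rw [happ]
    rcases lt_trichotomy t 0 with ht | rfl | ht
    · -- t < 0
      have hmem : (-t)⁻¹ • x - v ∈ C := by
        have h1 := hsmul _ hzC ((-t)⁻¹) (by rw [inv_nonneg]; linarith)
        have h2 : (-t)⁻¹ • (x + t • v) = (-t)⁻¹ • x - v := by
          rw [smul_add, smul_smul]
          rw [show (-t)⁻¹ * t = -1 by rw [inv_mul_eq_div, div_neg, div_self ht.ne]]
          simp [sub_eq_add_neg]
        rwa [h2] at h1
      have h3 := hc2 _ (f.domain.smul_mem _ hxD) hmem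
      rw [map_smul, smul_eq_mul] at h3
      have h4 : -t * c < F x := by
        have := mul_lt_mul_of_pos_left h3 (show (0:ℝ) < -t by linarith)
        rw [← mul_assoc, mul_inv_cancel₀ (show (-t) ≠ 0 by linarith), one_mul] at this
        exact this
      rw [show f ⟨x, hxD⟩ = F x from (hFval ⟨x, hxD⟩).symm]
      linarith
    · -- t = 0
      simp only [zero_smul, add_zero] at hzC hz0 ⊢
      rw [zero_mul, add_zero]
      exact hf ⟨x, hxD⟩ hzC hz0
    · -- t > 0
      have hmem : t⁻¹ • x + v ∈ C := by
        have h1 := hsmul _ hzC (t⁻¹) (by positivity)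
        have h2 : t⁻¹ • (x + t • v) = t⁻¹ • x + v := by
          rw [smul_add, smul_smul, inv_mul_cancel₀ ht.ne', one_smul]
        rwa [h2] at h1
      have h3 := hc1 _ (f.domain.smul_mem _ hxD) hmem
      rw [map_smul, smul_eq_mul] at h3
      have h4 : -F x < t * c := by
        have := mul_lt_mul_of_pos_left h3 ht
        rw [mul_neg, ← mul_assoc, mul_inv_cancel₀ ht.ne', one_mul] at this
        exact this
      rw [show f ⟨x, hxD⟩ = F x from (hFval ⟨x, hxD⟩).symm]
      linarith

private lemma cone_ext_top {M : Type*} [NormedAddCommGroup M] [NormedSpace ℝ M]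
    [FiniteDimensional ℝ M] (C : Set M) (hclosed : IsClosed C)
    (hadd : ∀ x ∈ C, ∀ y ∈ C, x + y ∈ C)
    (hsmul : ∀ x ∈ C, ∀ r : ℝ, 0 ≤ r → r • x ∈ C)
    (hpointed : C ∩ (-C) = {0}) :
    ∀ n : ℕ, ∀ f : M →ₗ.[ℝ] ℝ, finrank ℝ M ≤ finrank ℝ f.domain + n →
      (∀ x : f.domain, (x : M) ∈ C → (x : M) ≠ 0 → 0 < f x) →
      ∃ g : M →ₗ.[ℝ] ℝ, f ≤ g ∧ g.domain = ⊤ ∧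
        ∀ x : g.domain, (x : M) ∈ C → (x : M) ≠ 0 → 0 < g x := by
  intro n
  induction n with
  | zero =>
    intro f hrank hf
    refine ⟨f, le_refl f, ?_, hf⟩
    rw [add_zero] at hrank
    exact Submodule.eq_top_of_finrank_eq (le_antisymm (Submodule.finrank_le _) hrank)
  | succ n ih =>
    intro f hrank hf
    by_cases htop : f.domain = ⊤
    · exact ⟨f, le_refl f, htop, hf⟩
    · obtain ⟨v, hv⟩ : ∃ v, v ∉ f.domain := by
        by_contra hcon
        push_neg at hcon
        exact htop (Submodule.eq_top_iff'.2 hcon)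
      obtain ⟨g₁, hle₁, hdom₁, hpos₁⟩ :=
        cone_step C hclosed hadd hsmul hpointed f hf v hv
      have hlt : f.domain < g₁.domain := by
        rw [hdom₁]
        refine lt_of_le_of_ne le_sup_left fun hcontra => hv ?_
        rw [hcontra]
        exact Submodule.mem_sup_right (Submodule.mem_span_singleton_self v)
      have hrank₁ : finrank ℝ M ≤ finrank ℝ g₁.domain + n := by
        have := Submodule.finrank_lt_finrank_of_lt hlt
        omega
      obtain ⟨g, hle₂, hdom, hpos⟩ := ih g₁ hrank₁ hpos₁
      exact ⟨g, le_trans hle₁ hle₂, hdom, hpos⟩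

theorem extension_of_strictly_positive_functional
    {M : Type*} [NormedAddCommGroup M] [NormedSpace ℝ M] [FiniteDimensional ℝ M]
    (C : Set M) (hclosed : IsClosed C)
    (hadd : ∀ x ∈ C, ∀ y ∈ C, x + y ∈ C)
    (hsmul : ∀ x ∈ C, ∀ r : ℝ, 0 ≤ r → r • x ∈ C)
    (hpointed : C ∩ (-C) = {0})
    (S : Submodule ℝ M) (l : S →ₗ[ℝ] ℝ)
    (hl : ∀ s : S, (s : M) ∈ C → s ≠ 0 → 0 < l s) :
    ∃ L : M →ₗ[ℝ] ℝ, (∀ s : S, L (s : M) = l s) ∧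
      ∀ m ∈ C, m ≠ 0 → 0 < L m := by
  set f₀ : M →ₗ.[ℝ] ℝ := ⟨S, l⟩ with hf₀
  have hf₀pos : ∀ x : f₀.domain, (x : M) ∈ C → (x : M) ≠ 0 → 0 < f₀ x := by
    intro x hxC hx0
    exact hl x hxC (fun h => hx0 (by rw [h]; rfl))
  obtain ⟨g, hle, hdom, hpos⟩ := cone_ext_top C hclosed hadd hsmul hpointed
    (finrank ℝ M) f₀ (by omega) hf₀pos
  have hmem : ∀ m : M, m ∈ g.domain := fun m => by rw [hdom]; trivial
  set e : M →ₗ[ℝ] g.domain := LinearMap.codRestrict g.domain LinearMap.id hmem with he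
  refine ⟨g.toFun.comp e, ?_, ?_⟩
  · intro s
    have : ((s : M) : M) = ((⟨(s : M), hmem s⟩ : g.domain) : M) := rfl
    exact (hle.2 this).symm
  · intro m hmC hm0
    exact hpos ⟨m, hmem m⟩ hmC hm0
end

section
/- Let n, k be positive integers and let φ : M_n(ℂ) → M_k(ℂ) be a linear map. Then φ is completely positive if and only if its Choi matrix Φ_φ = [φ(E^{(n)}_{l,m})]_{l,m=1}^n ∈ M_{nk}(ℂ) is positive semidefinite. -/
open scoped Matrix ComplexOrder

/-- The map `I_m ⊗ φ`: apply `φ` to each `n×n` block of an `mn×mn` block matrix. -/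
def blockMap {n k : ℕ} (φ : Matrix (Fin n) (Fin n) ℂ →ₗ[ℂ] Matrix (Fin k) (Fin k) ℂ)
    (m : ℕ) (M : Matrix (Fin m × Fin n) (Fin m × Fin n) ℂ) :
    Matrix (Fin m × Fin k) (Fin m × Fin k) ℂ :=
  Matrix.of fun r s => φ (Matrix.of fun a b => M (r.1, a) (s.1, b)) r.2 s.2

/-- A linear map `φ : M_n(ℂ) → M_k(ℂ)` is completely positive if `I_m ⊗ φ` maps
positive semidefinite matrices to positive semidefinite matrices for every `m`. -/
def IsCompletelyPositive {n k : ℕ}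
    (φ : Matrix (Fin n) (Fin n) ℂ →ₗ[ℂ] Matrix (Fin k) (Fin k) ℂ) : Prop :=
  ∀ (m : ℕ) (M : Matrix (Fin m × Fin n) (Fin m × Fin n) ℂ),
    M.PosSemidef → (blockMap φ m M).PosSemidef

/-- The Choi matrix `[φ(E_{l,m})]_{l,m}` of a linear map `φ : M_n(ℂ) → M_k(ℂ)`,
with entries `(Φ_φ)_{(l,i),(m,j)} = φ(E^{(n)}_{l,m})_{i,j}`. -/
noncomputable def choiMatrix {n k : ℕ}
    (φ : Matrix (Fin n) (Fin n) ℂ →ₗ[ℂ] Matrix (Fin k) (Fin k) ℂ) :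
    Matrix (Fin n × Fin k) (Fin n × Fin k) ℂ :=
  Matrix.of fun r s => φ (Matrix.single r.1 s.1 1) r.2 s.2

lemma phi_entry {n k : ℕ} (φ : Matrix (Fin n) (Fin n) ℂ →ₗ[ℂ] Matrix (Fin k) (Fin k) ℂ)
    (X : Matrix (Fin n) (Fin n) ℂ) (i j : Fin k) :
    φ X i j = ∑ l, ∑ t, X l t * choiMatrix φ (l, i) (t, j) := by
  conv_lhs => rw [Matrix.matrix_eq_sum_single X]
  have h : ∀ (l t : Fin n), Matrix.single l t (X l t)
      = X l t • Matrix.single l t (1 : ℂ) := by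
    intro l t
    rw [Matrix.smul_single, smul_eq_mul, mul_one]
  simp_rw [h, map_sum, map_smul, Matrix.sum_apply, Matrix.smul_apply, smul_eq_mul]
  rfl

lemma kraus_cp {n k : ℕ} (φ : Matrix (Fin n) (Fin n) ℂ →ₗ[ℂ] Matrix (Fin k) (Fin k) ℂ)
    (B : (Fin n × Fin k) → Matrix (Fin k) (Fin n) ℂ)
    (hφ : ∀ X, φ X = ∑ p, B p * X * (B p)ᴴ) : IsCompletelyPositive φ := by
  intro m M hM
  set K : (Fin n × Fin k) → Matrix (Fin m × Fin k) (Fin m × Fin n) ℂ :=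
    fun p => Matrix.of fun x y => if x.1 = y.1 then B p x.2 y.2 else 0 with hK
  have key : blockMap φ m M = ∑ p, K p * M * (K p)ᴴ := by
    ext ⟨r, i⟩ ⟨s, j⟩
    show φ (Matrix.of fun a b => M (r, a) (s, b)) i j = _
    rw [hφ, Matrix.sum_apply, Matrix.sum_apply]
    refine Finset.sum_congr rfl fun p _ => ?_
    simp only [Matrix.mul_apply, Matrix.conjTranspose_apply, Matrix.of_apply, hK,
      Fintype.sum_prod_type, ite_mul, zero_mul, mul_ite, mul_zero,
      apply_ite (star : ℂ → ℂ), star_zero, Finset.sum_ite_irrel, Finset.sum_const_zero,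
      Finset.sum_ite_eq, Finset.sum_ite_eq', Finset.mem_univ, if_true]
  rw [key]
  refine Finset.sum_induction _ _ (fun a b ha hb => ha.add hb) (Matrix.PosSemidef.zero)
    (fun p _ => hM.mul_mul_conjTranspose_same (K p))

theorem completelyPositive_iff_choiMatrix_posSemidef {n k : ℕ} (hn : 0 < n) (hk : 0 < k)
    (φ : Matrix (Fin n) (Fin n) ℂ →ₗ[ℂ] Matrix (Fin k) (Fin k) ℂ) :
    IsCompletelyPositive φ ↔ (choiMatrix φ).PosSemidef := by
  constructor
  · intro h
    set v : Fin n × Fin n → ℂ := fun x => if x.2 = x.1 then 1 else 0 with hv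
    set M : Matrix (Fin n × Fin n) (Fin n × Fin n) ℂ :=
      Matrix.of fun x y => v x * star (v y) with hMdef
    have hM : M.PosSemidef := by
      refine Matrix.posSemidef_iff_dotProduct_mulVec.mpr ⟨?_, ?_⟩
      · ext x y
        simp only [Matrix.conjTranspose_apply, hMdef, Matrix.of_apply, star_mul, star_star]
      · intro x
        have : star x ⬝ᵥ (M *ᵥ x)
            = star (∑ q, star (v q) * x q) * (∑ q, star (v q) * x q) := by
          simp only [dotProduct, Matrix.mulVec, star_sum, star_mul, star_star,
            Finset.sum_mul, Finset.mul_sum, Pi.star_apply, hMdef, Matrix.of_apply]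
          rw [Finset.sum_comm]
          refine Finset.sum_congr rfl fun p _ => Finset.sum_congr rfl fun q _ => by ring
        rw [this]
        exact star_mul_self_nonneg _
    have := h n M hM
    have heq : choiMatrix φ = blockMap φ n M := by
      ext ⟨r, i⟩ ⟨s, j⟩
      show φ (Matrix.single r s 1) i j = φ (Matrix.of fun a b => M (r, a) (s, b)) i j
      have harg : (Matrix.single r s (1:ℂ))
          = Matrix.of fun a b => M (r, a) (s, b) := by
        ext a b
        simp only [Matrix.single, Matrix.of_apply, hMdef, hv,
          apply_ite (star : ℂ → ℂ), star_one, star_zero, ite_mul, one_mul, zero_mul]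
        split_ifs <;> simp_all
      rw [harg]
    rw [heq]
    exact this
  · intro hΦ
    obtain ⟨A, hA⟩ : ∃ A : Matrix (Fin n × Fin k) (Fin n × Fin k) ℂ, choiMatrix φ = Aᴴ * A := by
      open scoped MatrixOrder in
      have h0 : 0 ≤ choiMatrix φ := Matrix.nonneg_iff_posSemidef.mpr hΦ
      refine ⟨CFC.sqrt (choiMatrix φ), ?_⟩
      rw [← Matrix.star_eq_conjTranspose, (IsSelfAdjoint.of_nonneg (CFC.sqrt_nonneg _)).star_eq,
        CFC.sqrt_mul_sqrt_self _ h0]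
    refine kraus_cp φ (fun p => Matrix.of fun i l => star (A p (l, i))) (fun X => ?_)
    ext i j
    rw [phi_entry, Matrix.sum_apply]
    simp only [Matrix.mul_apply, Matrix.conjTranspose_apply, Matrix.of_apply, star_star, hA,
      Finset.sum_mul, Finset.mul_sum]
    rw [Finset.sum_comm]
    conv_rhs => rw [Finset.sum_comm]
    refine Finset.sum_congr rfl fun t _ => ?_
    rw [Finset.sum_comm]
    exact Finset.sum_congr rfl fun p _ => Finset.sum_congr rfl fun l _ => by ring
end

section
/- Let n, k be positive integers and let φ : M_n(ℂ) → M_k(ℂ) be a completely positive linear map. Then there exist a positive integer m with m ≤ nk and n×k complex matrices V_1, …, V_m such that φ(A) = V_1^*·A·V_1 + ⋯ + V_m^*·A·V_m for all A ∈ M_n(ℂ), where (·)^* denotes the conjugate transpose. -/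
open scoped Matrix ComplexOrder

lemma sum_rot3 {α β γ : Type*} [Fintype α] [Fintype β] [Fintype γ]
    (f : α → β → γ → ℂ) :
    ∑ a, ∑ b, ∑ c, f a b c = ∑ c, ∑ b, ∑ a, f a b c := by
  have h1 : ∀ a : α, ∑ b, ∑ c, f a b c = ∑ c, ∑ b, f a b c := fun a => Finset.sum_comm
  simp only [h1]
  have h2 : ∑ a : α, ∑ c : γ, (∑ b, f a b c) = ∑ c : γ, ∑ a : α, ∑ b, f a b c :=
    Finset.sum_comm
  rw [h2]
  exact Finset.sum_congr rfl fun c _ =>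
    Finset.sum_comm (f := fun a b => f a b c)

theorem kraus_representation_of_completelyPositive {n k : ℕ} (hn : 0 < n) (hk : 0 < k)
    (φ : Matrix (Fin n) (Fin n) ℂ →ₗ[ℂ] Matrix (Fin k) (Fin k) ℂ)
    (hφ : IsCompletelyPositive φ) :
    ∃ m : ℕ, 0 < m ∧ m ≤ n * k ∧ ∃ V : Fin m → Matrix (Fin n) (Fin k) ℂ,
      ∀ A : Matrix (Fin n) (Fin n) ℂ, φ A = ∑ i, (V i)ᴴ * A * V i := by
  classical
  have hC : (choiMatrix φ).PosSemidef := by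
    set w : Matrix (Fin 1) (Fin n × Fin n) ℂ :=
      Matrix.of fun _ p => if p.1 = p.2 then 1 else 0 with hw
    have hM : (wᴴ * w).PosSemidef := Matrix.posSemidef_conjTranspose_mul_self w
    have h2 := hφ n (wᴴ * w) hM
    have heq : blockMap φ n (wᴴ * w) = choiMatrix φ := by
      refine Matrix.ext fun r s => ?_
      simp only [blockMap, choiMatrix, Matrix.of_apply]
      have hmat : (Matrix.of fun a b => (wᴴ * w) (r.1, a) (s.1, b))
          = Matrix.single r.1 s.1 (1 : ℂ) := by
        refine Matrix.ext fun a b => ?_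
        by_cases h1 : r.1 = a <;> by_cases h2 : s.1 = b <;>
          simp [hw, Matrix.mul_apply, Matrix.conjTranspose_apply, Matrix.single,
            h1, h2]
      rw [hmat]
    rwa [heq] at h2
  obtain ⟨B, hB⟩ : ∃ B : Matrix (Fin n × Fin k) (Fin n × Fin k) ℂ, choiMatrix φ = Bᴴ * B := by
    open scoped MatrixOrder Matrix.Norms.L2Operator in
    obtain ⟨B, hB⟩ := CStarAlgebra.nonneg_iff_eq_star_mul_self.mp hC.nonneg
    exact ⟨B, hB⟩
  refine ⟨n * k, Nat.mul_pos hn hk, le_refl _,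
    fun t => Matrix.of fun a j => B (finProdFinEquiv.symm t) (a, j), fun A => ?_⟩
  rw [Equiv.sum_comp finProdFinEquiv.symm
    (fun p => (Matrix.of fun a j => B p (a, j))ᴴ * A * (Matrix.of fun a j => B p (a, j)))]
  ext i j
  have key : ∀ l m', φ (Matrix.single l m' (1:ℂ)) i j
      = ∑ p : Fin n × Fin k, star (B p (l, i)) * B p (m', j) := by
    intro l m'
    have h := congrFun (congrFun hB (l, i)) (m', j)
    simpa [choiMatrix, Matrix.mul_apply, Matrix.conjTranspose_apply] using h
  have hsb : ∀ l m' : Fin n, Matrix.single l m' (A l m')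
      = A l m' • Matrix.single l m' (1:ℂ) := fun l m' => by
    rw [Matrix.smul_single, smul_eq_mul, mul_one]
  conv_lhs => rw [Matrix.matrix_eq_sum_single A]
  simp only [hsb, map_sum, map_smul, Matrix.sum_apply, Matrix.smul_apply, key,
    smul_eq_mul, Finset.mul_sum]
  conv_rhs => simp only [Matrix.mul_apply, Matrix.conjTranspose_apply, Matrix.of_apply,
    Finset.sum_mul]
  rw [sum_rot3 (fun l m' p => A l m' * (star (B p (l, i)) * B p (m', j)))]
  exact Finset.sum_congr rfl fun p _ => Finset.sum_congr rfl fun m' _ =>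
    Finset.sum_congr rfl fun l _ => by ring
end
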